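/- arXiv:2003.11324 — 5 statements merged into one kernel-verified Lean document; each statement's English description precedes it below -/
import Mathlib

section
/- Let G be a group acting transitively on finite nonempty sets A and B with |A| = M, |B| = N and M ≥ N. Suppose the number of G-orbits on A × B (under the diagonal action) equals N. Then every G-orbit on A × B has cardinality exactly M, for every a ∈ A there exists b ∈ B with Stab_G(a) ≤ Stab_G(b), and there exists a G-equivariant surjection φ : A → B. -/
/-- If `G` acts transitively on finite nonempty sets `A` and `B` with `|A| = M ≥ N = |B|`
and has exactly `N` orbits on `A × B`, then every orbit on `A × B` has cardinality `M`,
every point stabilizer of `A` is contained in a point stabilizer of `B`, and there is a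
`G`-equivariant surjection `A → B`. -/
theorem stmt2 (G : Type*) [Group G] (A B : Type*) [Fintype A] [Fintype B]
    [Nonempty A] [Nonempty B] [MulAction G A] [MulAction G B]
    [MulAction.IsPretransitive G A] [MulAction.IsPretransitive G B]
    (M N : ℕ) (hM : Fintype.card A = M) (hN : Fintype.card B = N) (hMN : N ≤ M)
    (horb : Nat.card (MulAction.orbitRel.Quotient G (A × B)) = N) :
    (∀ p : A × B, Nat.card (MulAction.orbit G p) = M) ∧
    (∀ a : A, ∃ b : B, MulAction.stabilizer G a ≤ MulAction.stabilizer G b) ∧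
    (∃ φ : A → B, Function.Surjective φ ∧ ∀ (g : G) (a : A), φ (g • a) = g • φ a) := by
  classical
  -- every orbit has card ≥ M
  have hge : ∀ p : A × B, M ≤ Nat.card (MulAction.orbit G p) := by
    intro p
    have hsurj : Function.Surjective (fun q : MulAction.orbit G p => (q : A × B).1) := by
      intro a
      obtain ⟨g, hg⟩ := MulAction.exists_smul_eq G p.1 a
      exact ⟨⟨g • p, MulAction.mem_orbit p g⟩, hg⟩
    have h := Nat.card_le_card_of_surjective _ hsurj
    rwa [Nat.card_eq_fintype_card, hM] at h
  haveI : Fintype (MulAction.orbitRel.Quotient G (A × B)) :=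
    Fintype.ofFinite _
  -- card sum
  have hsum : ∑ ω : MulAction.orbitRel.Quotient G (A × B),
      Nat.card (MulAction.orbit G ω.out) = M * N := by
    have e := MulAction.selfEquivSigmaOrbits G (A × B)
    have := Nat.card_congr e
    rw [Nat.card_eq_fintype_card, Fintype.card_prod, hM, hN] at this
    rw [Nat.card_eq_fintype_card, Fintype.card_sigma] at this
    rw [this]
    exact Finset.sum_congr rfl fun ω _ => Nat.card_eq_fintype_card
  have hcardQ : Fintype.card (MulAction.orbitRel.Quotient G (A × B)) = N := by
    rwa [Nat.card_eq_fintype_card] at horb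
  -- each orbit of a representative has card exactly M
  have hout : ∀ ω : MulAction.orbitRel.Quotient G (A × B),
      Nat.card (MulAction.orbit G ω.out) = M := by
    by_contra hcon
    push_neg at hcon
    obtain ⟨ω₀, hω₀⟩ := hcon
    have hlt : M < Nat.card (MulAction.orbit G ω₀.out) :=
      lt_of_le_of_ne (hge _) (Ne.symm hω₀)
    have : M * N < ∑ ω : MulAction.orbitRel.Quotient G (A × B),
        Nat.card (MulAction.orbit G ω.out) := by
      calc M * N = ∑ _ω : MulAction.orbitRel.Quotient G (A × B), M := by
            rw [Finset.sum_const, Finset.card_univ, hcardQ, smul_eq_mul, mul_comm]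
        _ < _ := Finset.sum_lt_sum (fun ω _ => hge _) ⟨ω₀, Finset.mem_univ _, hlt⟩
    omega
  have h1 : ∀ p : A × B, Nat.card (MulAction.orbit G p) = M := by
    intro p
    have : MulAction.orbit G p = MulAction.orbit G
        (Quotient.out (⟦p⟧ : MulAction.orbitRel.Quotient G (A × B))) := by
      rw [MulAction.orbit_eq_iff]
      exact (MulAction.orbitRel G (A × B)).symm (Quotient.mk_out p)
    rw [this]
    exact hout _
  -- stabilizer containment (for every pair in fact)
  have hstab : ∀ (a : A) (b : B), MulAction.stabilizer G a ≤ MulAction.stabilizer G b := by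
    intro a b g hg
    haveI : Fintype (MulAction.orbit G (a, b)) := Fintype.ofFinite _
    set f : MulAction.orbit G (a, b) → A := fun q => (q : A × B).1 with hf
    have hsurj : Function.Surjective f := by
      intro x
      obtain ⟨g', hg'⟩ := MulAction.exists_smul_eq G a x
      refine ⟨⟨g' • (a, b), MulAction.mem_orbit (a, b) g'⟩, hg'⟩
    have hbij : Function.Bijective f := by
      rw [Fintype.bijective_iff_surjective_and_card]
      refine ⟨hsurj, ?_⟩
      rw [hM, ← h1 (a, b), Nat.card_eq_fintype_card]
    have hmem : g • (a, b) ∈ MulAction.orbit G (a, b) := MulAction.mem_orbit (a, b) g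
    have hmem' : (a, b) ∈ MulAction.orbit G (a, b) := MulAction.mem_orbit_self (a, b)
    have heq : (⟨g • (a, b), hmem⟩ : MulAction.orbit G (a, b)) = ⟨(a, b), hmem'⟩ := by
      apply hbij.1
      show (g • (a, b) : A × B).1 = a
      rw [Prod.smul_mk]
      exact hg
    have : g • (a, b) = (a, b) := Subtype.ext_iff.mp heq
    have : g • b = b := congrArg Prod.snd this
    exact this
  refine ⟨h1, fun a => ⟨Classical.arbitrary B, hstab a _⟩, ?_⟩
  -- construct the equivariant map
  obtain ⟨a₀⟩ := ‹Nonempty A›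
  obtain ⟨b₀⟩ := ‹Nonempty B›
  have hle := hstab a₀ b₀
  have hex : ∀ a : A, ∃ g : G, g • a₀ = a := fun a => MulAction.exists_smul_eq G a₀ a
  set φ : A → B := fun a => (hex a).choose • b₀ with hφ
  have hwd : ∀ (a : A) (g : G), g • a₀ = a → φ a = g • b₀ := by
    intro a g hg
    have h1' := (hex a).choose_spec
    have : g⁻¹ * (hex a).choose ∈ MulAction.stabilizer G a₀ := by
      rw [MulAction.mem_stabilizer_iff, mul_smul, h1', inv_smul_eq_iff, hg]
    have hb := hle this
    rw [MulAction.mem_stabilizer_iff, mul_smul, inv_smul_eq_iff] at hb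
    exact hb
  refine ⟨φ, ?_, ?_⟩
  · intro b
    obtain ⟨g, hg⟩ := MulAction.exists_smul_eq G b₀ b
    exact ⟨g • a₀, by rw [hwd (g • a₀) g rfl, hg]⟩
  · intro g a
    obtain ⟨k, hk⟩ := hex a
    rw [hwd a k hk, hwd (g • a) (g * k) (by rw [mul_smul, hk]), mul_smul]
end

section
/- Let G be a group acting transitively on finite nonempty sets A and B with |A| = M, |B| = N and M > N ≥ 2. Suppose the number of G-orbits on A × B (under the diagonal action) equals N. Then G does not act transitively on the set of 2-element subsets of A; in other words, the action of G on A is not 2-homogeneous. -/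
open Pointwise

/-- If `G` acts transitively on finite nonempty sets `A` and `B` with `|A| = M > N = |B| ≥ 2`
and has exactly `N` orbits on `A × B`, then the action of `G` on `A` is not `2`-homogeneous,
i.e. `G` is not transitive on `2`-element subsets of `A`. -/
theorem stmt3 (G : Type*) [Group G] (A B : Type*) [Fintype A] [Fintype B] [DecidableEq A]
    [Nonempty A] [Nonempty B] [MulAction G A] [MulAction G B]
    [MulAction.IsPretransitive G A] [MulAction.IsPretransitive G B]
    (M N : ℕ) (hM : Fintype.card A = M) (hN : Fintype.card B = N)
    (hMN : N < M) (hN2 : 2 ≤ N)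
    (horb : Nat.card (MulAction.orbitRel.Quotient G (A × B)) = N) :
    ¬ (∀ S T : Finset A, S.card = 2 → T.card = 2 → ∃ g : G, g • S = T) := by
  intro h2
  classical
  -- Key lemma: any element fixing a point of A fixes all of B.
  have hfix : ∀ (g : G) (a : A) (b : B), g • a = a → g • b = b := by
    intro g a b hga
    haveI : Fintype (MulAction.orbitRel.Quotient G (A × B)) := Fintype.ofFinite _
    let f : B → MulAction.orbitRel.Quotient G (A × B) := fun b => Quotient.mk'' (a, b)
    have hsurj : Function.Surjective f := by
      intro q
      induction q using Quotient.inductionOn' with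
      | h p =>
        obtain ⟨a', b'⟩ := p
        obtain ⟨h, hh⟩ := MulAction.exists_smul_eq G a' a
        refine ⟨h • b', Quotient.sound' ?_⟩
        exact ⟨h, by simp [Prod.smul_def, hh]⟩
    have hcard : Fintype.card B = Fintype.card (MulAction.orbitRel.Quotient G (A × B)) := by
      rw [Nat.card_eq_fintype_card] at horb
      rw [hN, horb]
    have hbij : Function.Bijective f :=
      (Fintype.bijective_iff_surjective_and_card f).mpr ⟨hsurj, hcard⟩
    have hfb : f (g • b) = f b := by
      apply Quotient.sound'
      exact ⟨g, by simp [Prod.smul_def, hga]⟩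
    exact hbij.1 hfb
  by_cases hK : ∀ (x : A) (g : G), (∀ b : B, g • b = b) → g • x = x
  · -- Case 1: the kernel of the action on B acts trivially on A.
    -- Then any element fixing a point of A fixes all of A.
    have hreg : ∀ (g : G) (a : A), g • a = a → ∀ a' : A, g • a' = a' := by
      intro g a ha a'
      exact hK a' g (fun b => hfix g a b ha)
    -- A has at least two elements
    have hA1 : 1 < Fintype.card A := by omega
    obtain ⟨a₁, a₂, h12⟩ := Fintype.exists_pair_of_one_lt_card hA1
    -- Any two elements outside {a₁, a₂} coincide.
    have huniq : ∀ y : A, y ≠ a₁ → y ≠ a₂ → ∃ g : G, g • a₁ = y ∧ g • a₂ = a₁ := by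
      intro y hy1 hy2
      obtain ⟨g, hg⟩ := h2 {a₁, a₂} {a₁, y} (Finset.card_pair h12) (Finset.card_pair (Ne.symm hy1))
      have hsm : g • ({a₁, a₂} : Finset A) = {g • a₁, g • a₂} := by
        simp [Finset.smul_finset_insert, Finset.smul_finset_singleton]
      rw [hsm] at hg
      have hm1 : g • a₁ ∈ ({a₁, y} : Finset A) := by
        rw [← hg]; simp
      have hm2 : g • a₂ ∈ ({a₁, y} : Finset A) := by
        rw [← hg]; simp
      simp only [Finset.mem_insert, Finset.mem_singleton] at hm1 hm2
      rcases hm1 with h1 | h1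
      · -- g fixes a₁, hence everything
        have := hreg g a₁ h1 a₂
        rw [this] at hm2
        rcases hm2 with h | h
        · exact absurd h.symm h12
        · exact absurd h.symm hy2
      · rcases hm2 with h | h
        · exact ⟨g, h1, h⟩
        · rw [← h1] at h
          exact absurd (smul_left_cancel g h) (Ne.symm h12)
    have hcard3 : Fintype.card A ≤ 3 := by
      by_cases hy : ∃ y : A, y ≠ a₁ ∧ y ≠ a₂
      · obtain ⟨y₀, hy₀1, hy₀2⟩ := hy
        have hsub : (Finset.univ : Finset A) ⊆ {a₁, a₂, y₀} := by
          intro a _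
          simp only [Finset.mem_insert, Finset.mem_singleton]
          by_cases h1 : a = a₁
          · exact Or.inl h1
          by_cases h2' : a = a₂
          · exact Or.inr (Or.inl h2')
          · obtain ⟨g, hg1, hg2⟩ := huniq a h1 h2'
            obtain ⟨g', hg1', hg2'⟩ := huniq y₀ hy₀1 hy₀2
            have : (g'⁻¹ * g) • a₂ = a₂ := by
              rw [mul_smul, hg2, ← hg2', inv_smul_smul]
            have := hreg _ _ this a₁
            rw [mul_smul, hg1] at this
            have : a = g' • a₁ := by
              rw [← this, smul_inv_smul]
            right; right; rw [this, hg1']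
        calc Fintype.card A = (Finset.univ : Finset A).card := (Finset.card_univ).symm
          _ ≤ ({a₁, a₂, y₀} : Finset A).card := Finset.card_le_card hsub
          _ ≤ 3 := Finset.card_insert_le _ _ |>.trans (by
                have := Finset.card_insert_le a₂ ({y₀} : Finset A)
                simp at this ⊢; omega)
      · push_neg at hy
        have hsub : (Finset.univ : Finset A) ⊆ {a₁, a₂} := by
          intro a _
          simp only [Finset.mem_insert, Finset.mem_singleton]
          by_cases h1 : a = a₁
          · exact Or.inl h1
          · exact Or.inr (hy a h1)
        have : Fintype.card A ≤ 2 := by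
          calc Fintype.card A = (Finset.univ : Finset A).card := (Finset.card_univ).symm
            _ ≤ ({a₁, a₂} : Finset A).card := Finset.card_le_card hsub
            _ ≤ 2 := by rw [Finset.card_pair h12]
        omega
    -- So M = 3 and N = 2.
    have hM3 : Fintype.card A = 3 := by omega
    have hN2' : Fintype.card B = 2 := by omega
    -- B = {b₁, b₂}
    obtain ⟨b₁, b₂, hb12, hBuniv⟩ : ∃ b₁ b₂ : B, b₁ ≠ b₂ ∧ (Finset.univ : Finset B) = {b₁, b₂} :=
      Finset.card_eq_two.mp (by rw [Finset.card_univ, hN2'])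
    have hBmem : ∀ b : B, b = b₁ ∨ b = b₂ := by
      intro b
      have hb : b ∈ ({b₁, b₂} : Finset B) := hBuniv ▸ Finset.mem_univ b
      simpa using hb
    obtain ⟨g, hg⟩ := MulAction.exists_smul_eq G b₁ b₂
    have hg2 : g • b₂ = b₁ := by
      rcases hBmem (g • b₂) with h | h
      · exact h
      · exact absurd (smul_left_cancel g (h.trans hg.symm)) (Ne.symm hb12)
    -- g² is trivial on B, hence on A.
    have hgg : ∀ b : B, g • g • b = b := by
      intro b
      rcases hBmem b with h | h <;> subst h
      · rw [hg, hg2]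
      · rw [hg2, hg]
    have hggA : ∀ a : A, g • g • a = a := by
      intro a
      have := hK a (g * g) (fun b => by rw [mul_smul]; exact hgg b)
      rwa [mul_smul] at this
    -- g, being an involution on a 3-element set, has a fixed point on A.
    have ⟨a, ha⟩ : ∃ a : A, g • a = a := by
      by_contra hno
      push_neg at hno
      obtain ⟨a₁', _⟩ := exists_true_iff_nonempty.mpr (inferInstance : Nonempty A)
      set x := g • a₁' with hx
      have hxne : x ≠ a₁' := hno a₁'
      have hgx : g • x = a₁' := hggA a₁'
      -- pick y outside {a₁', x}
      have hex : ∃ y : A, y ∉ ({a₁', x} : Finset A) := by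
        by_contra hall
        push_neg at hall
        have : (Finset.univ : Finset A) ⊆ {a₁', x} := fun a _ => hall a
        have := Finset.card_le_card this
        rw [Finset.card_univ, hM3, Finset.card_pair (Ne.symm hxne)] at this
        omega
      obtain ⟨y, hy⟩ := hex
      simp only [Finset.mem_insert, Finset.mem_singleton, not_or] at hy
      obtain ⟨hy1, hy2⟩ := hy
      -- univ = {a₁', x, y}
      have hcard' : ({a₁', x, y} : Finset A).card = 3 := by
        rw [Finset.card_insert_of_notMem (by simp [Ne.symm hxne, Ne.symm hy1]),
          Finset.card_pair (Ne.symm hy2)]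
      have huniv : ({a₁', x, y} : Finset A) = Finset.univ :=
        Finset.eq_univ_of_card _ (by rw [hcard', hM3])
      have hgy : g • y ∈ ({a₁', x, y} : Finset A) := by rw [huniv]; exact Finset.mem_univ _
      simp only [Finset.mem_insert, Finset.mem_singleton] at hgy
      rcases hgy with h | h | h
      · -- g•y = a₁' = g•x ⇒ y = x
        rw [← hgx] at h
        exact hy2 (smul_left_cancel g h)
      · -- g•y = x = g•a₁' ⇒ y = a₁'
        rw [hx] at h
        exact hy1 (smul_left_cancel g h)
      · exact hno y h
    have := hfix g a b₁ ha
    rw [hg] at this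
    exact hb12 this.symm
  · -- Case 2: some g acts trivially on B but moves some point of A.
    push_neg at hK
    obtain ⟨a₀, g₀, hg₀B, hg₀⟩ := hK
    by_cases htot : ∀ x y : A, ∃ g : G, (∀ b : B, g • b = b) ∧ g • x = y
    · -- Then A × B has a single orbit, contradicting N ≥ 2.
      have hsub : ∀ q q' : MulAction.orbitRel.Quotient G (A × B), q = q' := by
        intro q q'
        induction q using Quotient.inductionOn' with
        | h p =>
          induction q' using Quotient.inductionOn' with
          | h p' =>
            obtain ⟨a, b⟩ := p
            obtain ⟨a', b'⟩ := p'
            obtain ⟨h, hh⟩ := MulAction.exists_smul_eq G b b'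
            obtain ⟨k, hkB, hk⟩ := htot (h • a) a'
            apply Quotient.sound'
            have heq : (k * h) • (a, b) = (a', b') := by
              simp [Prod.smul_def, mul_smul, hk, hh, hkB]
            refine ⟨(k * h)⁻¹, ?_⟩
            rw [← heq]
            simp [mul_smul]
      haveI : Subsingleton (MulAction.orbitRel.Quotient G (A × B)) := ⟨hsub⟩
      haveI : Nonempty (MulAction.orbitRel.Quotient G (A × B)) :=
        ⟨Quotient.mk'' (Classical.arbitrary A, Classical.arbitrary B)⟩
      have : Nat.card (MulAction.orbitRel.Quotient G (A × B)) = 1 := Nat.card_eq_one_iff_unique.mpr ⟨inferInstance, inferInstance⟩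
      omega
    · push_neg at htot
      obtain ⟨x, y, hxy⟩ := htot
      have hxney : x ≠ y := by
        intro h
        exact hxy 1 (fun b => one_smul G b) (by rw [one_smul]; exact h)
      have hane : a₀ ≠ g₀ • a₀ := fun h => hg₀ h.symm
      obtain ⟨g, hg⟩ := h2 {a₀, g₀ • a₀} {x, y} (Finset.card_pair hane) (Finset.card_pair hxney)
      have hsm : g • ({a₀, g₀ • a₀} : Finset A) = {g • a₀, g • g₀ • a₀} := by
        simp [Finset.smul_finset_insert, Finset.smul_finset_singleton]
      rw [hsm] at hg
      -- k := g g₀ g⁻¹ acts trivially on B and sends g•a₀ to g•g₀•a₀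
      set k := g * g₀ * g⁻¹ with hkdef
      have hkB : ∀ b : B, k • b = b := by
        intro b
        rw [hkdef, mul_smul, mul_smul, hg₀B, smul_inv_smul]
      have hku : k • (g • a₀) = g • g₀ • a₀ := by
        rw [hkdef, mul_smul, mul_smul, inv_smul_smul]
      have hm1 : g • a₀ ∈ ({x, y} : Finset A) := by rw [← hg]; simp
      have hm2 : g • g₀ • a₀ ∈ ({x, y} : Finset A) := by rw [← hg]; simp
      simp only [Finset.mem_insert, Finset.mem_singleton] at hm1 hm2
      have hne' : g • a₀ ≠ g • g₀ • a₀ := fun h => hane (smul_left_cancel g h)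
      rcases hm1 with h1 | h1
      · rcases hm2 with h2' | h2'
        · rw [h1, h2'] at hne'; exact hne' rfl
        · exact hxy k hkB (by rw [← h1, hku, h2'])
      · rcases hm2 with h2' | h2'
        · have hkiB : ∀ b : B, k⁻¹ • b = b := by
            intro b
            conv_lhs => rw [← hkB b]
            rw [inv_smul_smul]
          exact hxy k⁻¹ hkiB (by rw [← h2', ← hku, inv_smul_smul, h1])
        · rw [h1, h2'] at hne'; exact hne' rfl
end

section
/- Let n ≥ 7 and let H ≤ S_n be a subgroup that fixes pointwise a set B ⊆ {1,…,n} of cardinality r ≥ 1; set A = {1,…,n} \ B. Let d be an integer with r < d ≤ (n−r)/2 such that O_r(H) = O_{r+1}(H) = ⋯ = O_d(H). Then H acts d-homogeneously on A. -/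
open Pointwise

/-- The number of orbits of a group `H` acting on a finite set `Ω` on the collection
of finsets of `Ω` satisfying the predicate `P` (for the induced action on finsets). -/
noncomputable def numOrbits (H : Type*) [Group H] {Ω : Type*} [DecidableEq Ω] [MulAction H Ω]
    (P : Finset Ω → Prop) : ℕ :=
  Nat.card (Quot (fun S T : {S : Finset Ω // P S} => ∃ h : H, h • S.val = T.val))

/-- A subgroup `H` of `Sym(Ω)` acts `d`-homogeneously on `A ⊆ Ω` if it is
transitive on `d`-element subsets of `A`. -/
def IsHomogeneousOn {Ω : Type*} [DecidableEq Ω] (H : Subgroup (Equiv.Perm Ω))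
    (A : Finset Ω) (d : ℕ) : Prop :=
  ∀ S T : Finset Ω, S ⊆ A → T ⊆ A → S.card = d → T.card = d → ∃ h ∈ H, h • S = T

namespace Stmt5Aux
variable {Ω : Type*} [DecidableEq Ω] [Fintype Ω]

/-- subsets of `A` of size `m` -/
abbrev Kt (A : Finset Ω) (m : ℕ) := {S : Finset Ω // S.card = m ∧ S ⊆ A}

lemma card_superset (A : Finset Ω) (k : ℕ) (U : Finset Ω) (hU : U ⊆ A) (hk : U.card ≤ k) :
    (Finset.univ.filter (fun T : Kt A k => U ⊆ T.val)).card
      = (A.card - U.card).choose (k - U.card) := by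
  rw [← Finset.card_sdiff_of_subset hU, ← Finset.card_powersetCard]
  refine Finset.card_bij' (fun T _ => T.val \ U)
    (fun V hV => ⟨U ∪ V, ?_, ?_⟩) ?_ ?_ ?_ ?_
  · rw [Finset.mem_powersetCard] at hV
    rw [Finset.card_union_of_disjoint, hV.2]
    · omega
    · exact Finset.disjoint_left.2 fun x hx hxV => (Finset.mem_sdiff.1 (hV.1 hxV)).2 hx
  · rw [Finset.mem_powersetCard] at hV
    exact Finset.union_subset hU fun x hx => (Finset.mem_sdiff.1 (hV.1 hx)).1
  · intro T hT
    simp only [Finset.mem_filter, Finset.mem_univ, true_and] at hT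
    rw [Finset.mem_powersetCard]
    refine ⟨fun x hx => ?_, ?_⟩
    · rw [Finset.mem_sdiff] at hx ⊢
      exact ⟨T.2.2 hx.1, hx.2⟩
    · rw [Finset.card_sdiff_of_subset hT, T.2.1]
  · intro V hV
    simp only [Finset.mem_filter, Finset.mem_univ, true_and]
    exact Finset.subset_union_left
  · intro T hT
    simp only [Finset.mem_filter, Finset.mem_univ, true_and] at hT
    apply Subtype.ext
    simp only
    ext x
    simp only [Finset.mem_union, Finset.mem_sdiff]
    constructor
    · rintro (h | h)
      · exact hT h
      · exact h.1
    · intro h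
      by_cases hx : x ∈ U
      · exact Or.inl hx
      · exact Or.inr ⟨h, hx⟩
  · intro V hV
    rw [Finset.mem_powersetCard] at hV
    simp only
    rw [Finset.union_sdiff_cancel_left]
    exact Finset.disjoint_left.2 fun x hx hxV => (Finset.mem_sdiff.1 (hV.1 hxV)).2 hx

lemma card_subsetOf (A : Finset Ω) (k : ℕ) (V : Finset Ω) (hV : V ⊆ A) :
    (Finset.univ.filter (fun R : Kt A k => R.val ⊆ V)).card = V.card.choose k := by
  rw [← Finset.card_powersetCard]
  refine Finset.card_bij' (fun R _ => R.val)
    (fun W hW => ⟨W, (Finset.mem_powersetCard.1 hW).2, (Finset.mem_powersetCard.1 hW).1.trans hV⟩)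
    ?_ ?_ ?_ ?_
  · intro R hR
    simp only [Finset.mem_filter, Finset.mem_univ, true_and] at hR
    exact Finset.mem_powersetCard.2 ⟨hR, R.2.1⟩
  · intro W hW
    simp only [Finset.mem_filter, Finset.mem_univ, true_and]
    exact (Finset.mem_powersetCard.1 hW).1
  · intro R hR; rfl
  · intro W hW; rfl

lemma key_identity (A : Finset Ω) (m : ℕ) (hm : 1 ≤ m) (hmA : 2 * m ≤ A.card)
    (S S' : Kt A m) :
    ((Finset.univ.filter (fun T : Kt A (m+1) => S.val ⊆ T.val ∧ S'.val ⊆ T.val)).card : ℚ)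
      = ((Finset.univ.filter (fun R : Kt A (m-1) => R.val ⊆ S.val ∧ R.val ⊆ S'.val)).card : ℚ)
        + (if S = S' then (A.card : ℚ) - 2 * m else 0) := by
  have hNcard : (Finset.univ.filter (fun T : Kt A (m+1) => S.val ⊆ T.val ∧ S'.val ⊆ T.val))
      = (Finset.univ.filter (fun T : Kt A (m+1) => S.val ∪ S'.val ⊆ T.val)) := by
    apply Finset.filter_congr; intro x _; simp [Finset.union_subset_iff]
  have hMcard : (Finset.univ.filter (fun R : Kt A (m-1) => R.val ⊆ S.val ∧ R.val ⊆ S'.val))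
      = (Finset.univ.filter (fun R : Kt A (m-1) => R.val ⊆ S.val ∩ S'.val)) := by
    apply Finset.filter_congr; intro x _; simp [Finset.subset_inter_iff]
  rw [hNcard, hMcard, card_subsetOf A _ _ (Finset.inter_subset_left.trans S.2.2)]
  have hui : (S.val ∪ S'.val).card + (S.val ∩ S'.val).card = 2 * m := by
    rw [Finset.card_union_add_card_inter, S.2.1, S'.2.1]; ring
  by_cases hSS : S = S'
  · subst hSS
    rw [if_pos rfl]
    have h1 : S.val ∪ S.val = S.val := Finset.union_self _
    have h2 : S.val ∩ S.val = S.val := Finset.inter_self _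
    rw [h1, h2, card_superset A (m+1) S.val S.2.2 (by rw [S.2.1]; omega), S.2.1]
    have hmle : m ≤ A.card := by omega
    have e1 : m + 1 - m = 1 := by omega
    have e2 : m.choose (m-1) = m := by
      rw [show m - 1 = m - (1:ℕ) from rfl, Nat.choose_symm (by omega : 1 ≤ m),
        Nat.choose_one_right]
    rw [e1, e2, Nat.choose_one_right, Nat.cast_sub hmle]
    ring
  · rw [if_neg hSS]
    have hilt : (S.val ∩ S'.val).card < m := by
      rcases lt_or_eq_of_le (Finset.card_le_card
          (Finset.inter_subset_left : S.val ∩ S'.val ⊆ S.val) |>.trans_eq S.2.1) with h | h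
      · exact h
      · exfalso
        apply hSS
        apply Subtype.ext
        have h1 : S.val ∩ S'.val = S.val :=
          Finset.eq_of_subset_of_card_le Finset.inter_subset_left (by omega)
        have h2 : S.val ∩ S'.val = S'.val :=
          Finset.eq_of_subset_of_card_le Finset.inter_subset_right (by rw [S'.2.1]; omega)
        rw [← h1, h2]
    by_cases hi : (S.val ∩ S'.val).card = m - 1
    · have hu : (S.val ∪ S'.val).card = m + 1 := by omega
      rw [card_superset A (m+1) _ (Finset.union_subset S.2.2 S'.2.2) (by omega), hu, hi]
      simp [Nat.choose_self, Nat.sub_self]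
    · have hu : m + 1 < (S.val ∪ S'.val).card := by omega
      have hN : (Finset.univ.filter (fun T : Kt A (m+1) => S.val ∪ S'.val ⊆ T.val)).card = 0 := by
        rw [Finset.card_eq_zero, Finset.filter_eq_empty_iff]
        intro T _ hsub
        have := Finset.card_le_card hsub
        rw [T.2.1] at this
        omega
      rw [hN, Nat.choose_eq_zero_of_lt (by omega)]
      simp

lemma sum_sq_expand {α β : Type*} [Fintype α] [Fintype β] (p : α → β → Prop)
    [∀ a b, Decidable (p a b)] (f : α → ℚ) :
    ∑ b : β, (∑ a : α, if p a b then f a else 0)^2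
      = ∑ a : α, ∑ a' : α,
          ((Finset.univ.filter (fun b => p a b ∧ p a' b)).card : ℚ) * (f a * f a') := by
  have h1 : ∀ b : β, (∑ a : α, if p a b then f a else 0)^2
      = ∑ a : α, ∑ a' : α, (if p a b ∧ p a' b then f a * f a' else 0) := by
    intro b
    rw [sq, Finset.sum_mul_sum]
    refine Finset.sum_congr rfl fun a _ => Finset.sum_congr rfl fun a' _ => ?_
    split_ifs with h1 h2 h3 <;> simp_all
  rw [Finset.sum_congr rfl fun b _ => h1 b]
  rw [Finset.sum_comm]
  refine Finset.sum_congr rfl fun a _ => ?_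
  rw [Finset.sum_comm]
  refine Finset.sum_congr rfl fun a' _ => ?_
  rw [← Finset.sum_filter, Finset.sum_const, nsmul_eq_mul]

/-- The "up" linear map. -/
def upMap (A : Finset Ω) (m : ℕ) : (Kt A m → ℚ) →ₗ[ℚ] (Kt A (m+1) → ℚ) where
  toFun f T := ∑ S : Kt A m, if S.val ⊆ T.val then f S else 0
  map_add' f g := by
    funext T
    show (∑ S : Kt A m, if S.val ⊆ T.val then (f + g) S else 0)
      = (∑ S : Kt A m, if S.val ⊆ T.val then f S else 0)
        + (∑ S : Kt A m, if S.val ⊆ T.val then g S else 0)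
    rw [← Finset.sum_add_distrib]
    exact Finset.sum_congr rfl fun S _ => by split_ifs <;> simp
  map_smul' c f := by
    funext T
    show (∑ S : Kt A m, if S.val ⊆ T.val then (c • f) S else 0)
      = c • (∑ S : Kt A m, if S.val ⊆ T.val then f S else 0)
    rw [smul_eq_mul, Finset.mul_sum]
    exact Finset.sum_congr rfl fun S _ => by split_ifs <;> simp

lemma upMap_apply (A : Finset Ω) (m : ℕ) (f : Kt A m → ℚ) (T : Kt A (m+1)) :
    upMap A m f T = ∑ S : Kt A m, if S.val ⊆ T.val then f S else 0 := rfl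

lemma upMap_injective (A : Finset Ω) (m : ℕ) (hm : 1 ≤ m) (hmA : 2 * (m + 1) ≤ A.card) :
    Function.Injective (upMap A m) := by
  rw [injective_iff_map_eq_zero]
  intro f hf
  by_contra hne
  have hexp := sum_sq_expand (fun (S : Kt A m) (T : Kt A (m+1)) => S.val ⊆ T.val) f
  have hexp2 := sum_sq_expand (fun (S : Kt A m) (R : Kt A (m-1)) => R.val ⊆ S.val) f
  have hkey : ∑ T : Kt A (m+1), ((upMap A m) f T)^2
      = (∑ R : Kt A (m-1), (∑ S : Kt A m, if R.val ⊆ S.val then f S else 0)^2)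
        + ((A.card : ℚ) - 2*m) * ∑ S : Kt A m, (f S)^2 := by
    calc ∑ T : Kt A (m+1), ((upMap A m) f T)^2
        = ∑ S : Kt A m, ∑ S' : Kt A m,
            ((Finset.univ.filter (fun T : Kt A (m+1) => S.val ⊆ T.val ∧ S'.val ⊆ T.val)).card : ℚ)
              * (f S * f S') := hexp
      _ = ∑ S : Kt A m, ∑ S' : Kt A m,
            (((Finset.univ.filter (fun R : Kt A (m-1) => R.val ⊆ S.val ∧ R.val ⊆ S'.val)).card : ℚ)
              + (if S = S' then (A.card : ℚ) - 2 * m else 0)) * (f S * f S') := by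
            refine Finset.sum_congr rfl fun S _ => Finset.sum_congr rfl fun S' _ => ?_
            rw [key_identity A m hm (by omega) S S']
      _ = (∑ S : Kt A m, ∑ S' : Kt A m,
            ((Finset.univ.filter (fun R : Kt A (m-1) => R.val ⊆ S.val ∧ R.val ⊆ S'.val)).card : ℚ)
              * (f S * f S'))
          + ∑ S : Kt A m, ∑ S' : Kt A m,
            (if S = S' then (A.card : ℚ) - 2 * m else 0) * (f S * f S') := by
            rw [← Finset.sum_add_distrib]
            refine Finset.sum_congr rfl fun S _ => ?_
            rw [← Finset.sum_add_distrib]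
            exact Finset.sum_congr rfl fun S' _ => by ring
      _ = (∑ R : Kt A (m-1), (∑ S : Kt A m, if R.val ⊆ S.val then f S else 0)^2)
          + ((A.card : ℚ) - 2*m) * ∑ S : Kt A m, (f S)^2 := by
            rw [← hexp2]
            congr 1
            rw [Finset.mul_sum]
            refine Finset.sum_congr rfl fun S _ => ?_
            have heq : ∀ S' : Kt A m,
                (if S = S' then (A.card : ℚ) - 2*m else 0) * (f S * f S')
                  = if S = S' then ((A.card : ℚ) - 2*m) * (f S * f S') else 0 := by
              intro S'; split_ifs <;> ring
            rw [Finset.sum_congr rfl fun S' _ => heq S', Finset.sum_ite_eq Finset.univ S]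
            simp [sq]
  have hpos : (0:ℚ) < ∑ S : Kt A m, (f S)^2 := by
    have hSne : ∃ S, f S ≠ 0 := by
      by_contra h
      push_neg at h
      exact hne (funext h)
    obtain ⟨S0, hS0⟩ := hSne
    have : ∀ S ∈ Finset.univ, (0:ℚ) ≤ (f S)^2 := fun S _ => sq_nonneg _
    refine Finset.sum_pos' this ⟨S0, Finset.mem_univ _, by positivity⟩
  have hzero : ∑ T : Kt A (m+1), ((upMap A m) f T)^2 = 0 := by
    rw [hf]; simp
  have hD : (0:ℚ) ≤ ∑ R : Kt A (m-1), (∑ S : Kt A m, if R.val ⊆ S.val then f S else 0)^2 :=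
    Finset.sum_nonneg fun R _ => sq_nonneg _
  have hc : (0:ℚ) < (A.card : ℚ) - 2*m := by
    have h1 : 2*m + 2 ≤ A.card := by omega
    have h2 : (2*m + 2 : ℚ) ≤ (A.card : ℚ) := by exact_mod_cast h1
    linarith
  nlinarith [mul_pos hc hpos]

variable {G : Type*} [Group G] [MulAction G Ω]

section Action
variable (G) (A : Finset Ω) (hA : ∀ (g : G), ∀ x ∈ A, g • x ∈ A)

/-- action of `g` on `Kt A m`. -/
def act (g : G) {m : ℕ} (S : Kt A m) : Kt A m :=
  ⟨g • S.val, by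
    constructor
    · rw [Finset.card_smul_finset, S.2.1]
    · intro y hy
      rw [Finset.mem_smul_finset] at hy
      obtain ⟨x, hx, rfl⟩ := hy
      exact hA g x (S.2.2 hx)⟩

lemma act_val (g : G) {m : ℕ} (S : Kt A m) : (act G A hA g S).val = g • S.val := rfl

lemma act_act (g g' : G) {m : ℕ} (S : Kt A m) :
    act G A hA g (act G A hA g' S) = act G A hA (g * g') S := by
  apply Subtype.ext
  show g • (g' • S.val) = (g * g') • S.val
  rw [mul_smul]

/-- `act g` as an equiv. -/
def actEquiv (g : G) (m : ℕ) : Kt A m ≃ Kt A m where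
  toFun := act G A hA g
  invFun := act G A hA g⁻¹
  left_inv S := by rw [act_act]; simp [act]
  right_inv S := by rw [act_act]; simp [act]

/-- The invariant functions. -/
def InvSub (m : ℕ) : Submodule ℚ (Kt A m → ℚ) where
  carrier := {f | ∀ (g : G) (S : Kt A m), f (act G A hA g S) = f S}
  add_mem' := fun {f} {f'} hf hf' g S => by
    simp only [Pi.add_apply, hf g S, hf' g S]
  zero_mem' := fun g S => rfl
  smul_mem' := fun c f hf g S => by simp only [Pi.smul_apply, hf g S]

lemma mem_InvSub {m : ℕ} (f : Kt A m → ℚ) :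
    f ∈ InvSub G A hA m ↔ ∀ (g : G) (S : Kt A m), f (act G A hA g S) = f S := Iff.rfl

lemma upMap_mem_inv (m : ℕ) (f : Kt A m → ℚ) (hf : f ∈ InvSub G A hA m) :
    upMap A m f ∈ InvSub G A hA (m+1) := by
  intro g T
  rw [upMap_apply, upMap_apply]
  rw [← Equiv.sum_comp (actEquiv G A hA g m)]
  refine Finset.sum_congr rfl fun S _ => ?_
  have hsub : (actEquiv G A hA g m S).val ⊆ (act G A hA g T).val ↔ S.val ⊆ T.val := by
    show g • S.val ⊆ g • T.val ↔ S.val ⊆ T.val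
    exact Finset.smul_finset_subset_smul_finset_iff
  exact if_congr hsub (hf g S) rfl

end Action

def rel (G : Type*) [Group G] [MulAction G Ω] (A : Finset Ω) (m : ℕ)
    (S T : Kt A m) : Prop :=
  ∃ g : G, g • S.val = T.val

noncomputable def nOrb (G : Type*) [Group G] [MulAction G Ω] (A : Finset Ω) (m : ℕ) : ℕ :=
  Nat.card (Quot (rel G A m))

section Action2
variable (G) (A : Finset Ω) (hA : ∀ (g : G), ∀ x ∈ A, g • x ∈ A)

/-- invariant functions are equivalent to functions on the orbit space -/
noncomputable def invEquiv (m : ℕ) : (InvSub G A hA m) ≃ₗ[ℚ] (Quot (rel G A m) → ℚ) where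
  toFun f := Quot.lift f.val (by
    rintro S T ⟨g, hg⟩
    have h1 : act G A hA g S = T := Subtype.ext (by rw [act_val]; exact hg)
    rw [← h1]
    exact ((mem_InvSub G A hA f.val).1 f.2 g S).symm)
  map_add' f f' := by funext q; induction q using Quot.ind; rfl
  map_smul' c f := by funext q; induction q using Quot.ind; rfl
  invFun φ := ⟨fun S => φ (Quot.mk _ S), by
    rw [mem_InvSub G A hA]
    intro g S
    have : Quot.mk (rel G A m) (act G A hA g S) = Quot.mk (rel G A m) S :=
      (Quot.sound ⟨g, (act_val G A hA g S).symm ▸ rfl⟩).symm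
    rw [this]⟩
  left_inv f := by apply Subtype.ext; funext S; rfl
  right_inv φ := by funext q; induction q using Quot.ind; rfl

noncomputable instance (m : ℕ) : Fintype (Quot (rel G A m)) := Fintype.ofFinite _

lemma finrank_invSub (m : ℕ) : Module.finrank ℚ (InvSub G A hA m) = nOrb G A m := by
  rw [(invEquiv G A hA m).finrank_eq, Module.finrank_fintype_fun_eq_card, nOrb,
    Nat.card_eq_fintype_card]

lemma nOrb_pos (m : ℕ) (hm : m ≤ A.card) : 1 ≤ nOrb G A m := by
  have h1 : Nonempty (Kt A m) := by
    obtain ⟨S, hS, hc⟩ := Finset.exists_subset_card_eq hm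
    exact ⟨⟨S, hc, hS⟩⟩
  have h2 : Nonempty (Quot (rel G A m)) := Nonempty.map (Quot.mk _) h1
  exact Nat.one_le_iff_ne_zero.2 (Nat.card_ne_zero.2 ⟨h2, inferInstance⟩)

lemma nOrb_zero : nOrb G A 0 = 1 := by
  rw [nOrb, Nat.card_eq_one_iff_unique]
  constructor
  · constructor
    rintro ⟨S⟩ ⟨T⟩
    have hS : S = T := Subtype.ext
      (by rw [Finset.card_eq_zero.1 S.2.1, Finset.card_eq_zero.1 T.2.1])
    rw [hS]
  · exact ⟨Quot.mk _ ⟨∅, Finset.card_empty, Finset.empty_subset A⟩⟩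

include hA in
lemma nOrb_mono (m : ℕ) (hmA : 2 * (m + 1) ≤ A.card) :
    nOrb G A m ≤ nOrb G A (m + 1) := by
  rcases Nat.eq_zero_or_pos m with rfl | hm
  · rw [nOrb_zero]
    exact nOrb_pos G A 1 (by omega)
  · rw [← finrank_invSub G A hA m, ← finrank_invSub G A hA (m+1)]
    have hres : ∀ x ∈ InvSub G A hA m, upMap A m x ∈ InvSub G A hA (m+1) :=
      fun x hx => upMap_mem_inv G A hA m x hx
    have hinj : Function.Injective ((upMap A m).restrict hres) := by
      intro x y hxy
      apply Subtype.ext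
      apply upMap_injective A m hm hmA
      exact congrArg Subtype.val hxy
    exact LinearMap.finrank_le_finrank_of_injective hinj

end Action2

section Decomp
variable (G) (B : Finset Ω) (hfix : ∀ (g : G), ∀ b ∈ B, g • b = b)

def relFull (k : ℕ) (S T : {S : Finset Ω // S.card = k}) : Prop := ∃ g : G, g • S.val = T.val

include hfix

lemma smul_mem_compl : ∀ (g : G), ∀ x ∈ Bᶜ, g • x ∈ Bᶜ := by
  intro g x hx
  rw [Finset.mem_compl] at hx ⊢
  intro hgB
  have h1 : g⁻¹ • (g • x) = g • x := hfix g⁻¹ _ hgB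
  rw [inv_smul_smul] at h1
  exact hx (h1 ▸ hgB)

lemma smul_inter_B (g : G) (S : Finset Ω) : (g • S) ∩ B = S ∩ B := by
  ext x
  simp only [Finset.mem_inter, Finset.mem_smul_finset]
  constructor
  · rintro ⟨⟨y, hy, rfl⟩, hB⟩
    have hyB : y ∈ B := by
      by_contra hyB
      have := smul_mem_compl G B hfix g y (Finset.mem_compl.2 hyB)
      exact (Finset.mem_compl.1 this) hB
    rw [hfix g y hyB] at hB ⊢
    exact ⟨hy, hB⟩
  · rintro ⟨hS, hB⟩
    exact ⟨⟨x, hS, hfix g x hB⟩, hB⟩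

lemma smul_sdiff_B (g : G) (S : Finset Ω) : (g • S) \ B = g • (S \ B) := by
  ext x
  simp only [Finset.mem_sdiff, Finset.mem_smul_finset]
  constructor
  · rintro ⟨⟨y, hy, rfl⟩, hB⟩
    refine ⟨y, ⟨hy, fun hyB => ?_⟩, rfl⟩
    rw [hfix g y hyB] at hB
    exact hB hyB
  · rintro ⟨y, ⟨hy, hyB⟩, rfl⟩
    refine ⟨⟨y, hy, rfl⟩, fun h => ?_⟩
    have := smul_mem_compl G B hfix g y (Finset.mem_compl.2 hyB)
    exact Finset.mem_compl.1 this h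

lemma smul_of_subset_B (g : G) (J : Finset Ω) (hJ : J ⊆ B) : g • J = J := by
  show Finset.image (g • ·) J = J
  rw [Finset.image_congr (g := id) (fun x hx => hfix g x (hJ hx)), Finset.image_id]

/-- The sigma type indexing orbits of `k`-subsets. -/
abbrev OrbSigma (k : ℕ) :=
  Σ J : {J : Finset Ω // J ∈ B.powerset}, Quot (rel G Bᶜ (k - J.val.card))

omit hfix in
lemma sigma_eq_helper (k : ℕ) (J J' : {J : Finset Ω // J ∈ B.powerset}) (hJ : J = J')
    (S : Kt Bᶜ (k - J.val.card)) (S' : Kt Bᶜ (k - J'.val.card))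
    (h : ∃ g : G, g • S.val = S'.val) :
    (⟨J, Quot.mk _ S⟩ : OrbSigma G B k) = ⟨J', Quot.mk _ S'⟩ := by
  subst hJ
  exact congrArg (fun q => (⟨J, q⟩ : OrbSigma G B k)) (Quot.sound h)

/-- decomposition equivalence -/
noncomputable def decompEquiv (k : ℕ) (hk : B.card ≤ k) :
    Quot (relFull (Ω := Ω) G k) ≃ OrbSigma G B k where
  toFun := Quot.lift
    (fun S => ⟨⟨S.val ∩ B, Finset.mem_powerset.2 Finset.inter_subset_right⟩,
      Quot.mk _ ⟨S.val \ B, by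
        constructor
        · show (S.val \ B).card = k - (S.val ∩ B).card
          have h1 := Finset.card_inter_add_card_sdiff S.val B
          have h2 := S.2
          omega
        · intro x hx
          rw [Finset.mem_compl]
          exact (Finset.mem_sdiff.1 hx).2⟩⟩)
    (by
      rintro S T ⟨g, hg⟩
      refine sigma_eq_helper G B k _ _ (Subtype.ext ?_) _ _ ⟨g, ?_⟩
      · show S.val ∩ B = T.val ∩ B
        rw [← hg, smul_inter_B G B hfix]
      · show g • (S.val \ B) = T.val \ B
        rw [← hg, smul_sdiff_B G B hfix])
  invFun := fun p => Quot.lift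
    (fun T => Quot.mk (relFull G k) ⟨p.1.val ∪ T.val, by
      rw [Finset.card_union_of_disjoint, T.2.1]
      · have hJB := Finset.mem_powerset.1 p.1.2
        have := Finset.card_le_card hJB
        omega
      · exact Finset.disjoint_left.2 fun x hxJ hxT =>
          Finset.mem_compl.1 (T.2.2 hxT) (Finset.mem_powerset.1 p.1.2 hxJ)⟩)
    (by
      rintro T T' ⟨g, hg⟩
      apply Quot.sound
      refine ⟨g, ?_⟩
      show g • (p.1.val ∪ T.val) = p.1.val ∪ T'.val
      rw [Finset.smul_finset_union, ← hg,
        smul_of_subset_B G B hfix g p.1.val (Finset.mem_powerset.1 p.1.2)]) p.2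
  left_inv := by
    apply Quot.ind
    intro S
    simp only
    apply congrArg (Quot.mk _)
    apply Subtype.ext
    show S.val ∩ B ∪ S.val \ B = S.val
    rw [Finset.union_comm, Finset.sdiff_union_inter]
  right_inv := by
    rintro ⟨J, q⟩
    induction q using Quot.ind with
    | _ T =>
      simp only
      refine sigma_eq_helper G B k _ _ (Subtype.ext ?_) _ _ ⟨1, ?_⟩
      · show (J.val ∪ T.val) ∩ B = J.val
        rw [Finset.union_inter_distrib_right]
        have h1 : J.val ∩ B = J.val := Finset.inter_eq_left.2 (Finset.mem_powerset.1 J.2)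
        have h2 : T.val ∩ B = ∅ := by
          rw [Finset.eq_empty_iff_forall_notMem]
          intro x hx
          rw [Finset.mem_inter] at hx
          exact Finset.mem_compl.1 (T.2.2 hx.1) hx.2
        rw [h1, h2, Finset.union_empty]
      · rw [one_smul]
        show (J.val ∪ T.val) \ B = T.val
        rw [Finset.union_sdiff_distrib]
        have h1 : J.val \ B = ∅ := Finset.sdiff_eq_empty_iff_subset.2 (Finset.mem_powerset.1 J.2)
        have h2 : T.val \ B = T.val := by
          rw [Finset.sdiff_eq_self_iff_disjoint]
          exact Finset.disjoint_left.2 fun x hxT hxB =>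
            Finset.mem_compl.1 (T.2.2 hxT) hxB
        rw [h1, h2, Finset.empty_union]

lemma card_decomp (k : ℕ) (hk : B.card ≤ k) :
    Nat.card (Quot (relFull (Ω := Ω) G k)) = ∑ J ∈ B.powerset, nOrb G Bᶜ (k - J.card) := by
  rw [Nat.card_congr (decompEquiv G B hfix k hk)]
  have h1 : Nat.card (OrbSigma G B k)
      = ∑ J : {J : Finset Ω // J ∈ B.powerset}, Nat.card (Quot (rel G Bᶜ (k - J.val.card))) := by
    classical
    have : ∀ (J : {J : Finset Ω // J ∈ B.powerset}), Fintype (Quot (rel G Bᶜ (k - J.val.card))) :=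
      fun J => Fintype.ofFinite _
    rw [Nat.card_eq_fintype_card, Fintype.card_sigma]
    exact Finset.sum_congr rfl fun J _ => (Nat.card_eq_fintype_card).symm
  rw [h1, ← Finset.sum_attach B.powerset (fun J => nOrb G Bᶜ (k - J.card))]
  rfl

end Decomp
end Stmt5Aux

/-- Lemma 3.5(1): if `H ≤ S_n` (`n ≥ 7`) fixes pointwise a set `B` of cardinality `r ≥ 1`,
`A` is the complement of `B`, and `O_r(H) = ⋯ = O_d(H)` for some `r < d ≤ (n-r)/2`,
then `H` acts `d`-homogeneously on `A`. -/
theorem stmt5 (n r d : ℕ) (hn : 7 ≤ n)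
    (H : Subgroup (Equiv.Perm (Fin n))) (B : Finset (Fin n))
    (hBcard : B.card = r) (hr : 1 ≤ r)
    (hfix : ∀ h ∈ H, ∀ b ∈ B, h b = b)
    (hd1 : r < d) (hd2 : 2 * d ≤ n - r)
    (hO : ∀ k, r ≤ k → k ≤ d →
      numOrbits H (fun S : Finset (Fin n) => S.card = k)
        = numOrbits H (fun S : Finset (Fin n) => S.card = r)) :
    IsHomogeneousOn H Bᶜ d := by
  classical
  set G := H
  -- pointwise fixing in smul form
  have hfix' : ∀ (g : H), ∀ b ∈ B, g • b = b := fun g b hb => hfix g.1 g.2 b hb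
  have hA : ∀ (g : H), ∀ x ∈ Bᶜ, g • x ∈ Bᶜ := Stmt5Aux.smul_mem_compl H B hfix'
  have hAcard : (Bᶜ : Finset (Fin n)).card = n - r := by
    rw [Finset.card_compl, hBcard, Fintype.card_fin]
  -- orbit counts on subsets of A
  set a : ℕ → ℕ := fun m => Stmt5Aux.nOrb H Bᶜ m with ha
  -- numOrbits is the Nat.card of the Quot of relFull
  have hnum : ∀ k, numOrbits H (fun S : Finset (Fin n) => S.card = k)
      = Nat.card (Quot (Stmt5Aux.relFull (Ω := Fin n) H k)) := fun k => rfl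
  -- step equalities
  have hstep : ∀ k, r ≤ k → k < d → ∀ j ≤ r, a (k + 1 - j) = a (k - j) := by
    intro k hk hkd j hj
    have hsum : ∑ J ∈ B.powerset, a (k + 1 - J.card) = ∑ J ∈ B.powerset, a (k - J.card) := by
      have e1 := Stmt5Aux.card_decomp H B hfix' k (by omega)
      have e2 := Stmt5Aux.card_decomp H B hfix' (k+1) (by omega)
      have e3 := hO k hk (by omega)
      have e4 := hO (k+1) (by omega) (by omega)
      rw [hnum, e1] at e3
      rw [hnum, e2] at e4
      rw [e4, e3]
    have hle : ∀ J ∈ B.powerset, a (k - J.card) ≤ a (k + 1 - J.card) := by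
      intro J hJ
      have hJr : J.card ≤ r := hBcard ▸ Finset.card_le_card (Finset.mem_powerset.1 hJ)
      have h1 : k + 1 - J.card = (k - J.card) + 1 := by omega
      rw [h1]
      exact Stmt5Aux.nOrb_mono H Bᶜ hA (k - J.card) (by omega)
    have := (Finset.sum_eq_sum_iff_of_le hle).1 hsum.symm
    obtain ⟨J, hJB, hJc⟩ := Finset.exists_subset_card_eq (hBcard ▸ hj : j ≤ B.card)
    have := this J (Finset.mem_powerset.2 hJB)
    rw [hJc] at this
    exact this.symm
  -- a m = a 0 for all m ≤ d
  have hconst : ∀ m, m ≤ d → a m = a 0 := by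
    intro m
    induction m with
    | zero => intro _; rfl
    | succ p ih =>
      intro hpd
      rcases le_or_gt r p with hrp | hrp
      · -- use k = p, j = 0
        have := hstep p hrp (by omega) 0 (by omega)
        simp only [Nat.sub_zero] at this
        rw [this]
        exact ih (by omega)
      · -- p < r : use k = r, j = r - p
        have := hstep r le_rfl (by omega) (r - p) (by omega)
        have h1 : r + 1 - (r - p) = p + 1 := by omega
        have h2 : r - (r - p) = p := by omega
        rw [h1, h2] at this
        rw [this]
        exact ih (by omega)
  have had : a d = 1 := by
    rw [hconst d le_rfl, ha]
    exact Stmt5Aux.nOrb_zero H Bᶜ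
  -- conclude transitivity
  intro S T hS hT hScard hTcard
  have hSub : Subsingleton (Quot (Stmt5Aux.rel H Bᶜ d)) := by
    have := (Nat.card_eq_one_iff_unique).1 had
    exact this.1
  set S' : Stmt5Aux.Kt (Bᶜ : Finset (Fin n)) d := ⟨S, hScard, hS⟩
  set T' : Stmt5Aux.Kt (Bᶜ : Finset (Fin n)) d := ⟨T, hTcard, hT⟩
  have hq : Quot.mk _ S' = Quot.mk (Stmt5Aux.rel H Bᶜ d) T' := Subsingleton.elim _ _
  have hequiv : Equivalence (Stmt5Aux.rel (Ω := Fin n) H Bᶜ d) := by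
    constructor
    · intro X; exact ⟨1, one_smul _ _⟩
    · rintro X Y ⟨g, hg⟩
      exact ⟨g⁻¹, by rw [← hg, inv_smul_smul]⟩
    · rintro X Y Z ⟨g, hg⟩ ⟨g', hg'⟩
      exact ⟨g' * g, by rw [mul_smul, hg, hg']⟩
  have hrel : Stmt5Aux.rel H Bᶜ d S' T' := hequiv.eqvGen_iff.1 (Quot.eqvGen_exact hq)
  obtain ⟨g, hg⟩ := hrel
  exact ⟨g.1, g.2, hg⟩
end

section
/- Let n ≥ 7 and let H ≤ S_n be a subgroup that fixes pointwise a set B ⊆ {1,…,n} of cardinality r ≥ 1; set A = {1,…,n} \ B, and assume H has no fixed points in A. Let d be an integer with r + 1 < d ≤ (n−r)/2 such that O_{r+1}(H) = O_{r+2}(H) = ⋯ = O_d(H). Then H acts d-homogeneously on A. -/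
open Pointwise

/-! ### Auxiliary development -/

set_option linter.unusedSectionVars false
set_option maxHeartbeats 1000000

section Core
variable {Ω : Type*} [DecidableEq Ω]

/-- Adjointness of the up and down operators between levels `k` and `k+1`. -/
lemma adjoint_sum (A : Finset Ω) (k : ℕ) (F g : Finset Ω → ℚ) :
    ∑ T ∈ A.powersetCard (k+1), (∑ y ∈ T, F (T.erase y)) * g T
      = ∑ S ∈ A.powersetCard k, F S * (∑ x ∈ A \ S, g (insert x S)) := by
  simp_rw [Finset.sum_mul, Finset.mul_sum]
  rw [Finset.sum_sigma', Finset.sum_sigma']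
  refine Finset.sum_nbij' (fun p => ⟨p.1.erase p.2, p.2⟩) (fun p => ⟨insert p.2 p.1, p.2⟩)
    ?_ ?_ ?_ ?_ ?_
  · rintro ⟨T, y⟩ hp
    simp only [Finset.mem_sigma, Finset.mem_powersetCard] at hp ⊢
    obtain ⟨⟨hTA, hTc⟩, hyT⟩ := hp
    refine ⟨⟨(Finset.erase_subset _ _).trans hTA, ?_⟩, ?_⟩
    · rw [Finset.card_erase_of_mem hyT, hTc]; rfl
    · simp [Finset.mem_sdiff, hTA hyT]
  · rintro ⟨S, x⟩ hp
    simp only [Finset.mem_sigma, Finset.mem_powersetCard, Finset.mem_sdiff] at hp ⊢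
    obtain ⟨⟨hSA, hSc⟩, hxA, hxS⟩ := hp
    exact ⟨⟨Finset.insert_subset hxA hSA, by rw [Finset.card_insert_of_notMem hxS, hSc]⟩,
      Finset.mem_insert_self _ _⟩
  · rintro ⟨T, y⟩ hp
    simp only [Finset.mem_sigma, Finset.mem_powersetCard] at hp
    exact Sigma.ext (by simp [Finset.insert_erase hp.2]) (heq_of_eq rfl)
  · rintro ⟨S, x⟩ hp
    simp only [Finset.mem_sigma, Finset.mem_powersetCard, Finset.mem_sdiff] at hp
    exact Sigma.ext (by simp [Finset.erase_insert hp.2.2]) (heq_of_eq rfl)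
  · rintro ⟨T, y⟩ hp
    simp only [Finset.mem_sigma, Finset.mem_powersetCard] at hp
    simp [Finset.insert_erase hp.2]

/-- Commutator identity `D U = U D + (|A| - 2k)` on level-`k` subsets of `A`. -/
lemma commutator_sum (A : Finset Ω) (k : ℕ) (f : Finset Ω → ℚ) (S : Finset Ω)
    (hSA : S ⊆ A) (hSc : S.card = k) :
    ∑ x ∈ A \ S, (∑ y ∈ insert x S, f ((insert x S).erase y))
      = (∑ y ∈ S, ∑ x ∈ A \ (S.erase y), f (insert x (S.erase y)))
        + ((A.card : ℚ) - 2*k) * f S := by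
  have hkA : k ≤ A.card := hSc ▸ Finset.card_le_card hSA
  have hL : ∀ x ∈ A \ S, (∑ y ∈ insert x S, f ((insert x S).erase y))
      = f S + ∑ y ∈ S, f (insert x (S.erase y)) := by
    intro x hx
    rw [Finset.mem_sdiff] at hx
    rw [Finset.sum_insert hx.2, Finset.erase_insert hx.2]
    congr 1
    refine Finset.sum_congr rfl fun y hy => ?_
    rw [Finset.erase_insert_of_ne (by rintro rfl; exact hx.2 hy)]
  have hR : ∀ y ∈ S, (∑ x ∈ A \ (S.erase y), f (insert x (S.erase y)))
      = f S + ∑ x ∈ A \ S, f (insert x (S.erase y)) := by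
    intro y hy
    rw [Finset.sdiff_erase (hSA hy), Finset.sum_insert (by simp [Finset.mem_sdiff, hy]),
      Finset.insert_erase hy]
  rw [Finset.sum_congr rfl hL, Finset.sum_congr rfl hR, Finset.sum_add_distrib,
    Finset.sum_add_distrib, Finset.sum_const, Finset.sum_const, Finset.card_sdiff_of_subset hSA,
    Finset.sum_comm, hSc]
  rw [nsmul_eq_mul, nsmul_eq_mul]
  push_cast [Nat.cast_sub hkA]
  ring

/-- Core lemma: the up operator is injective below the middle layer. -/
lemma core_zero (A : Finset Ω) (k : ℕ) (hk : 1 ≤ k) (hk2 : 2*k < A.card)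
    (f : Finset Ω → ℚ)
    (h0 : ∀ T ∈ A.powersetCard (k+1), ∑ y ∈ T, f (T.erase y) = 0) :
    ∀ S ∈ A.powersetCard k, f S = 0 := by
  set Uf : Finset Ω → ℚ := fun T => ∑ y ∈ T, f (T.erase y) with hUf
  set Df : Finset Ω → ℚ := fun S => ∑ x ∈ A \ S, f (insert x S) with hDf
  have h1 : (0:ℚ) = ∑ S ∈ A.powersetCard k, f S * (∑ x ∈ A \ S, Uf (insert x S)) := by
    rw [← adjoint_sum A k f Uf]
    exact (Finset.sum_eq_zero fun T hT => by rw [h0 T hT, zero_mul]).symm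
  have h2 : ∀ S ∈ A.powersetCard k, (∑ x ∈ A \ S, Uf (insert x S))
      = (∑ y ∈ S, Df (S.erase y)) + ((A.card : ℚ) - 2*k) * f S := by
    intro S hS
    rw [Finset.mem_powersetCard] at hS
    exact commutator_sum A k f S hS.1 hS.2
  have h3 : ∑ S ∈ A.powersetCard k, (∑ y ∈ S, Df (S.erase y)) * f S
      = ∑ S' ∈ A.powersetCard (k-1), Df S' * Df S' := by
    have hk' : k - 1 + 1 = k := Nat.succ_pred_eq_of_pos hk
    calc ∑ S ∈ A.powersetCard k, (∑ y ∈ S, Df (S.erase y)) * f S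
        = ∑ S ∈ A.powersetCard (k-1+1), (∑ y ∈ S, Df (S.erase y)) * f S := by rw [hk']
      _ = ∑ S' ∈ A.powersetCard (k-1), Df S' * (∑ x ∈ A \ S', f (insert x S')) :=
          adjoint_sum A (k-1) Df f
      _ = ∑ S' ∈ A.powersetCard (k-1), Df S' * Df S' := rfl
  have h4 : (0:ℚ) = (∑ S' ∈ A.powersetCard (k-1), Df S' * Df S')
      + ((A.card : ℚ) - 2*k) * ∑ S ∈ A.powersetCard k, f S * f S := by
    rw [h1, Finset.sum_congr rfl (fun S hS => by rw [h2 S hS])]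
    simp_rw [mul_add, Finset.sum_add_distrib]
    rw [← h3, Finset.mul_sum]
    congr 1
    · exact Finset.sum_congr rfl fun S _ => mul_comm _ _
    · exact Finset.sum_congr rfl fun S _ => by ring
  have hc : (0:ℚ) < (A.card : ℚ) - 2*k := by
    have : (2*k : ℚ) < A.card := by exact_mod_cast hk2
    linarith
  have hsq : ∑ S ∈ A.powersetCard k, f S * f S = 0 := by
    have hnn1 : (0:ℚ) ≤ ∑ S' ∈ A.powersetCard (k-1), Df S' * Df S' :=
      Finset.sum_nonneg fun S _ => mul_self_nonneg _
    have hnn2 : (0:ℚ) ≤ ∑ S ∈ A.powersetCard k, f S * f S :=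
      Finset.sum_nonneg fun S _ => mul_self_nonneg _
    nlinarith
  intro S hS
  have := (Finset.sum_eq_zero_iff_of_nonneg
    (fun S _ => mul_self_nonneg (f S))).mp hsq S hS
  exact mul_self_eq_zero.mp this

end Core

section Orb
variable {Ω : Type*} [Fintype Ω] [DecidableEq Ω] (H : Subgroup (Equiv.Perm Ω))

/-- The orbit space of the induced action on finsets satisfying `P`. -/
def OrbT (P : Finset Ω → Prop) : Type _ :=
  Quot (fun S T : {S : Finset Ω // P S} => ∃ h : H, h • S.val = T.val)

lemma numOrbits_eq (P : Finset Ω → Prop) : numOrbits H P = Nat.card (OrbT H P) := rfl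

instance (P : Finset Ω → Prop) : Finite (OrbT H P) := Quot.finite _

lemma rel_equivalence (P : Finset Ω → Prop) :
    Equivalence (fun S T : {S : Finset Ω // P S} => ∃ h : H, h • S.val = T.val) := by
  constructor
  · exact fun S => ⟨1, one_smul _ _⟩
  · rintro S T ⟨h, e⟩; exact ⟨h⁻¹, by rw [← e, inv_smul_smul]⟩
  · rintro S T W ⟨h, e⟩ ⟨g, e'⟩; exact ⟨g * h, by rw [mul_smul, e, e']⟩

lemma smul_val (h : H) (E : Finset Ω) :
    h • E = E.image ((h : Equiv.Perm Ω) : Ω → Ω) := by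
  rw [Finset.smul_finset_def]; rfl

lemma smul_erase (h : H) (E : Finset Ω) (y : Ω) :
    h • (E.erase y) = (h • E).erase ((h : Equiv.Perm Ω) y) := by
  rw [smul_val, smul_val, Finset.image_erase (Equiv.injective _)]

/-- extension-by-zero of a function on orbit classes of level-`m` subsets of `A`. -/
noncomputable def gext (A : Finset Ω) (m : ℕ)
    (φ : OrbT H (fun S => S ⊆ A ∧ S.card = m) → ℚ) (E : Finset Ω) : ℚ :=
  if hE : E ⊆ A ∧ E.card = m then φ (Quot.mk _ ⟨E, hE⟩) else 0

lemma gext_pos (A : Finset Ω) (m : ℕ) (φ : OrbT H (fun S => S ⊆ A ∧ S.card = m) → ℚ)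
    (E : Finset Ω) (hE : E ⊆ A ∧ E.card = m) :
    gext H A m φ E = φ (Quot.mk _ ⟨E, hE⟩) := dif_pos hE

lemma smul_subset_A (A : Finset Ω) (hA : ∀ h : H, ∀ a ∈ A, (h : Equiv.Perm Ω) a ∈ A)
    (h : H) {E : Finset Ω} (hE : E ⊆ A) : (h • E : Finset Ω) ⊆ A := by
  intro x hx
  rw [smul_val, Finset.mem_image] at hx
  obtain ⟨a, ha, rfl⟩ := hx
  exact hA h a (hE ha)

lemma gext_smul (A : Finset Ω) (hA : ∀ h : H, ∀ a ∈ A, (h : Equiv.Perm Ω) a ∈ A) (m : ℕ)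
    (φ : OrbT H (fun S => S ⊆ A ∧ S.card = m) → ℚ) (h : H) (E : Finset Ω)
    (hE : E ⊆ A ∧ E.card = m) :
    gext H A m φ (h • E) = gext H A m φ E := by
  have h1 : (h • E : Finset Ω) ⊆ A ∧ (h • E : Finset Ω).card = m :=
    ⟨smul_subset_A H A hA h hE.1, by rw [Finset.card_smul_finset]; exact hE.2⟩
  rw [gext_pos H A m φ _ h1, gext_pos H A m φ _ hE]
  exact congrArg φ (Quot.sound ⟨h, rfl⟩).symm

lemma lift_wd (A : Finset Ω) (hA : ∀ h : H, ∀ a ∈ A, (h : Equiv.Perm Ω) a ∈ A) (m : ℕ)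
    (φ : OrbT H (fun S => S ⊆ A ∧ S.card = m) → ℚ)
    (S T : {S : Finset Ω // S ⊆ A ∧ S.card = m + 1})
    (hST : ∃ h : H, h • S.val = T.val) :
    ∑ y ∈ S.val, gext H A m φ (S.val.erase y)
      = ∑ y ∈ T.val, gext H A m φ (T.val.erase y) := by
  obtain ⟨h, e⟩ := hST
  rw [← e, smul_val, Finset.sum_image (fun a _ b _ hab => Equiv.injective _ hab)]
  refine Finset.sum_congr rfl fun y hy => ?_
  have heq : (Finset.image (⇑(h : Equiv.Perm Ω)) S.val).erase ((h : Equiv.Perm Ω) y)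
      = h • (S.val.erase y) := by rw [smul_erase, smul_val]
  rw [heq, gext_smul H A hA m φ h _
    ⟨(Finset.erase_subset _ _).trans S.prop.1,
      by rw [Finset.card_erase_of_mem hy, S.prop.2]; rfl⟩]

/-- The induced up-operator on invariant functions, as a linear map. -/
noncomputable def Phi (A : Finset Ω) (m : ℕ)
    (hA : ∀ h : H, ∀ a ∈ A, (h : Equiv.Perm Ω) a ∈ A) :
    (OrbT H (fun S : Finset Ω => S ⊆ A ∧ S.card = m) → ℚ)
      →ₗ[ℚ] (OrbT H (fun S : Finset Ω => S ⊆ A ∧ S.card = m + 1) → ℚ) where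
  toFun φ := Quot.lift (fun T => ∑ y ∈ T.val, gext H A m φ (T.val.erase y))
    (lift_wd H A hA m φ)
  map_add' φ ψ := by
    funext q
    induction q using Quot.ind with
    | _ T =>
      show (∑ y ∈ T.val, gext H A m (φ + ψ) (T.val.erase y)) = _
      have h : ∀ E, gext H A m (φ + ψ) E = gext H A m φ E + gext H A m ψ E := by
        intro E; unfold gext; split
        · rfl
        · simp
      simp only [h, Finset.sum_add_distrib]; rfl
  map_smul' c φ := by
    funext q
    induction q using Quot.ind with
    | _ T =>
      show (∑ y ∈ T.val, gext H A m (c • φ) (T.val.erase y)) = _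
      have h : ∀ E, gext H A m (c • φ) E = c * gext H A m φ E := by
        intro E; unfold gext; split
        · rfl
        · simp
      simp only [h, ← Finset.mul_sum]; rfl

/-- Livingstone–Wagner style monotonicity of the number of orbits below the middle layer. -/
theorem LW_mono (A : Finset Ω) (hA : ∀ h : H, ∀ a ∈ A, (h : Equiv.Perm Ω) a ∈ A)
    (m : ℕ) (hm : 1 ≤ m) (h2 : 2*m < A.card) :
    Nat.card (OrbT H (fun S : Finset Ω => S ⊆ A ∧ S.card = m))
      ≤ Nat.card (OrbT H (fun S : Finset Ω => S ⊆ A ∧ S.card = m + 1)) := by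
  classical
  letI : Fintype (OrbT H (fun S : Finset Ω => S ⊆ A ∧ S.card = m)) := Fintype.ofFinite _
  letI : Fintype (OrbT H (fun S : Finset Ω => S ⊆ A ∧ S.card = m + 1)) := Fintype.ofFinite _
  have hinj : Function.Injective (Phi H A m hA) := by
    rw [injective_iff_map_eq_zero]
    intro φ hφ
    have hzero : ∀ S ∈ A.powersetCard (m+1), ∑ y ∈ S, gext H A m φ (S.erase y) = 0 := by
      intro S hS
      rw [Finset.mem_powersetCard] at hS
      exact congrFun hφ (Quot.mk _ ⟨S, hS⟩)
    have hcz := core_zero A m hm h2 (gext H A m φ) hzero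
    funext q
    induction q using Quot.ind with
    | _ S =>
      have h := hcz S.val (Finset.mem_powersetCard.mpr S.prop)
      rw [gext_pos H A m φ S.val S.prop] at h
      exact h
  calc Nat.card (OrbT H (fun S : Finset Ω => S ⊆ A ∧ S.card = m))
      = Module.finrank ℚ ((OrbT H (fun S : Finset Ω => S ⊆ A ∧ S.card = m)) → ℚ) := by
        rw [Module.finrank_pi, Nat.card_eq_fintype_card]
    _ ≤ Module.finrank ℚ ((OrbT H (fun S : Finset Ω => S ⊆ A ∧ S.card = m + 1)) → ℚ) :=
        LinearMap.finrank_le_finrank_of_injective hinj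
    _ = Nat.card (OrbT H (fun S : Finset Ω => S ⊆ A ∧ S.card = m + 1)) := by
        rw [Module.finrank_pi, Nat.card_eq_fintype_card]

/-- commuting `Quot` with `Sigma` for a fiberwise relation on subtypes over a common carrier. -/
def quotSigma {ι : Type*} {κ : Type*} (p : ι → κ → Prop) (r : κ → κ → Prop) :
    Quot (fun x y : Σ i : ι, Subtype (p i) => x.1 = y.1 ∧ r x.2.val y.2.val)
      ≃ Σ i : ι, Quot (fun a b : Subtype (p i) => r a.val b.val) where
  toFun := Quot.lift (fun x => ⟨x.1, Quot.mk _ x.2⟩) (by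
    rintro ⟨i, a⟩ ⟨j, b⟩ ⟨h1, h2⟩
    dsimp at h1
    subst h1
    exact congrArg (Sigma.mk i) (Quot.sound h2))
  invFun := fun x =>
    Quot.lift (fun a => Quot.mk _ (⟨x.1, a⟩ : Σ i : ι, Subtype (p i)))
      (fun a b h => Quot.sound ⟨rfl, h⟩) x.2
  left_inv := by
    apply Quot.ind
    rintro ⟨i, a⟩
    rfl
  right_inv := by
    rintro ⟨i, q⟩
    induction q using Quot.ind with
    | _ a => rfl

section Decomp
variable (B : Finset Ω) (hfix : ∀ h : H, ∀ b ∈ B, (h : Equiv.Perm Ω) b = b)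

include hfix in
lemma apply_mem_B_iff (h : H) (x : Ω) : (h : Equiv.Perm Ω) x ∈ B ↔ x ∈ B := by
  constructor
  · intro hx
    have h2 := hfix h⁻¹ _ hx
    have h3 : ((h⁻¹ : H) : Equiv.Perm Ω) ((h : Equiv.Perm Ω) x) = x := by
      show ((h : Equiv.Perm Ω))⁻¹ ((h : Equiv.Perm Ω) x) = x
      exact (h : Equiv.Perm Ω).symm_apply_apply x
    rw [h3] at h2
    rw [h2]
    exact hx
  · intro hx
    rw [hfix h x hx]; exact hx

include hfix in
lemma smul_inter_B (h : H) (S : Finset Ω) : (h • S) ∩ B = S ∩ B := by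
  ext x
  simp only [Finset.mem_inter, smul_val, Finset.mem_image]
  constructor
  · rintro ⟨⟨a, ha, rfl⟩, hb⟩
    have : a ∈ B := (apply_mem_B_iff H B hfix h a).mp hb
    rw [hfix h a this]
    exact ⟨ha, this⟩
  · rintro ⟨hs, hb⟩
    exact ⟨⟨x, hs, hfix h x hb⟩, hb⟩

include hfix in
lemma smul_sdiff_B (h : H) (S : Finset Ω) : (h • S) \ B = h • (S \ B) := by
  ext x
  simp only [Finset.mem_sdiff, smul_val, Finset.mem_image]
  constructor
  · rintro ⟨⟨a, ha, rfl⟩, hb⟩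
    exact ⟨a, ⟨ha, fun hm => hb ((apply_mem_B_iff H B hfix h a).mpr hm)⟩, rfl⟩
  · rintro ⟨a, ⟨ha, hb⟩, rfl⟩
    exact ⟨⟨a, ha, rfl⟩, fun hm => hb ((apply_mem_B_iff H B hfix h a).mp hm)⟩

include hfix in
lemma smul_of_subset_B (h : H) (J : Finset Ω) (hJ : J ⊆ B) : h • J = J := by
  rw [smul_val]
  rw [Finset.image_congr (fun x hx => hfix h x (hJ hx))]
  simp

variable (k : ℕ) (hk : B.card ≤ k)

include hk in
/-- splitting a `k`-subset into its `B`-part and the rest. -/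
def splitEquiv : {S : Finset Ω // S.card = k}
    ≃ Σ J : {J : Finset Ω // J ∈ B.powerset},
        {S : Finset Ω // S ⊆ Bᶜ ∧ S.card = k - (J : Finset Ω).card} where
  toFun S := ⟨⟨S.val ∩ B, Finset.mem_powerset.mpr Finset.inter_subset_right⟩,
    ⟨S.val \ B, by
      constructor
      · intro x hx
        rw [Finset.mem_sdiff] at hx
        simpa [Finset.mem_compl] using hx.2
      · rw [← Finset.sdiff_inter_self_left, Finset.card_sdiff_of_subset Finset.inter_subset_left,
          S.prop]⟩⟩
  invFun x := ⟨x.2.val ∪ x.1.val, by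
    have hdisj : Disjoint x.2.val x.1.val := by
      refine Finset.disjoint_left.mpr fun a ha hb => ?_
      have h1 := x.2.prop.1 ha
      have h2 := Finset.mem_powerset.mp x.1.prop hb
      rw [Finset.mem_compl] at h1
      exact h1 h2
    rw [Finset.card_union_of_disjoint hdisj, x.2.prop.2,
      Nat.sub_add_cancel ((Finset.card_le_card (Finset.mem_powerset.mp x.1.prop)).trans hk)]⟩
  left_inv S := Subtype.ext (Finset.sdiff_union_inter _ _)
  right_inv x := by
    refine Sigma.subtype_ext (Subtype.ext ?_) ?_
    · show (x.2.val ∪ x.1.val) ∩ B = x.1.val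
      ext a
      simp only [Finset.mem_inter, Finset.mem_union]
      constructor
      · rintro ⟨ha | ha, hb⟩
        · exact absurd hb (by simpa [Finset.mem_compl] using x.2.prop.1 ha)
        · exact ha
      · intro ha
        exact ⟨Or.inr ha, Finset.mem_powerset.mp x.1.prop ha⟩
    · show (x.2.val ∪ x.1.val) \ B = x.2.val
      ext a
      simp only [Finset.mem_sdiff, Finset.mem_union]
      constructor
      · rintro ⟨ha | ha, hb⟩
        · exact ha
        · exact absurd (Finset.mem_powerset.mp x.1.prop ha) hb
      · intro ha
        exact ⟨Or.inl ha, by simpa [Finset.mem_compl] using x.2.prop.1 ha⟩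

include hfix hk in
lemma splitEquiv_rel (S T : {S : Finset Ω // S.card = k}) :
    (∃ h : H, h • S.val = T.val) ↔
      ((splitEquiv B k hk S).1 = (splitEquiv B k hk T).1
        ∧ ∃ h : H, h • (splitEquiv B k hk S).2.val = (splitEquiv B k hk T).2.val) := by
  show (∃ h : H, h • S.val = T.val) ↔
    ((⟨S.val ∩ B, _⟩ : {J : Finset Ω // J ∈ B.powerset}) = ⟨T.val ∩ B, _⟩
      ∧ ∃ h : H, h • (S.val \ B) = T.val \ B)
  constructor
  · rintro ⟨h, e⟩
    refine ⟨Subtype.ext ?_, ⟨h, ?_⟩⟩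
    · show S.val ∩ B = T.val ∩ B
      rw [← e, smul_inter_B H B hfix]
    · rw [← smul_sdiff_B H B hfix, e]
  · rintro ⟨hJ, h, e⟩
    have hJ' : S.val ∩ B = T.val ∩ B := congrArg Subtype.val hJ
    refine ⟨h, ?_⟩
    calc h • S.val = h • ((S.val \ B) ∪ (S.val ∩ B)) := by rw [Finset.sdiff_union_inter]
      _ = h • (S.val \ B) ∪ h • (S.val ∩ B) := Finset.smul_finset_union
      _ = (T.val \ B) ∪ (T.val ∩ B) := by
          rw [e, smul_of_subset_B H B hfix h _ Finset.inter_subset_right, hJ']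
      _ = T.val := Finset.sdiff_union_inter _ _

include hfix hk in
theorem decomp :
    numOrbits H (fun S : Finset Ω => S.card = k)
      = ∑ J ∈ B.powerset, numOrbits H (fun S => S ⊆ Bᶜ ∧ S.card = k - J.card) := by
  classical
  have e1 : OrbT H (fun S : Finset Ω => S.card = k)
      ≃ Σ J : {J : Finset Ω // J ∈ B.powerset},
          OrbT H (fun S => S ⊆ Bᶜ ∧ S.card = k - (J : Finset Ω).card) := by
    refine (Quot.congr (splitEquiv B k hk) ?_).trans
      (quotSigma (fun (J : {J : Finset Ω // J ∈ B.powerset}) (S : Finset Ω) =>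
        S ⊆ Bᶜ ∧ S.card = k - (J : Finset Ω).card) (fun a b => ∃ h : H, h • a = b))
    intro S T
    exact splitEquiv_rel H B hfix k hk S T
  rw [numOrbits_eq, Nat.card_congr e1]
  letI : ∀ J : {J : Finset Ω // J ∈ B.powerset},
      Fintype (OrbT H (fun S => S ⊆ Bᶜ ∧ S.card = k - (J : Finset Ω).card)) :=
    fun J => Fintype.ofFinite _
  rw [Nat.card_eq_fintype_card, Fintype.card_sigma]
  rw [← Finset.sum_coe_sort B.powerset
    (fun J => numOrbits H (fun S => S ⊆ Bᶜ ∧ S.card = k - J.card))]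
  refine Finset.sum_congr rfl fun J _ => ?_
  rw [numOrbits_eq, Nat.card_eq_fintype_card]

end Decomp

section Trans
attribute [local instance] Classical.propDecidable
variable (A : Finset Ω) (hA : ∀ h : H, ∀ a ∈ A, (h : Equiv.Perm Ω) a ∈ A)

/-- class of a point's singleton in orbit space of `1`-subsets of `A`. -/
def cls (a : Ω) (ha : a ∈ A) : OrbT H (fun S : Finset Ω => S ⊆ A ∧ S.card = 1) :=
  Quot.mk _ ⟨{a}, by simp [ha]⟩

lemma cls_congr (a b : Ω) (ha : a ∈ A) (hb : b ∈ A) (h : a = b) :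
    cls H A a ha = cls H A b hb := by subst h; rfl

include hA in
lemma cls_smul (h : H) (a : Ω) (ha : a ∈ A) (hb : (h : Equiv.Perm Ω) a ∈ A) :
    cls H A ((h : Equiv.Perm Ω) a) hb = cls H A a ha := by
  refine (Quot.sound ⟨h, ?_⟩).symm
  show h • ({a} : Finset Ω) = {(h : Equiv.Perm Ω) a}
  rw [smul_val, Finset.image_singleton]

/-- each class in `OrbT H (card = 1)` is a `cls`. -/
lemma exists_cls (q : OrbT H (fun S : Finset Ω => S ⊆ A ∧ S.card = 1)) :
    ∃ a, ∃ ha : a ∈ A, q = cls H A a ha := by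
  induction q using Quot.ind with
  | _ S =>
    obtain ⟨a, haS⟩ := Finset.card_eq_one.mp S.prop.2
    have ha : a ∈ A := S.prop.1 (haS ▸ Finset.mem_singleton_self a)
    refine ⟨a, ha, ?_⟩
    unfold cls
    congr 1
    exact Subtype.ext haS

/-- the type map from orbits of 2-subsets to the finset of point-classes. -/
noncomputable def tau (hA : ∀ h : H, ∀ a ∈ A, (h : Equiv.Perm Ω) a ∈ A) :
    OrbT H (fun S : Finset Ω => S ⊆ A ∧ S.card = 2)
    → Finset (OrbT H (fun S : Finset Ω => S ⊆ A ∧ S.card = 1)) := by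
  refine Quot.lift
    (fun S => S.val.attach.image (fun a => cls H A a.val (S.prop.1 a.prop))) ?_
  rintro S T ⟨h, e⟩
  ext q
  simp only [Finset.mem_image, Finset.mem_attach, true_and, Subtype.exists]
  constructor
  · rintro ⟨a, haS, rfl⟩
    have haT : (h : Equiv.Perm Ω) a ∈ T.val := by
      rw [← e, smul_val, Finset.mem_image]; exact ⟨a, haS, rfl⟩
    exact ⟨(h : Equiv.Perm Ω) a, haT,
      cls_smul H A hA h a (S.prop.1 haS) (T.prop.1 haT)⟩
  · rintro ⟨b, hbT, rfl⟩
    have hb : b ∈ h • S.val := e ▸ hbT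
    rw [smul_val, Finset.mem_image] at hb
    obtain ⟨a, haS, rfl⟩ := hb
    exact ⟨a, haS,
      (cls_smul H A hA h a (S.prop.1 haS) (T.prop.1 hbT)).symm⟩

include hA in
lemma tau_pair (a b : Ω) (ha : a ∈ A) (hb : b ∈ A)
    (pf : ({a, b} : Finset Ω) ⊆ A ∧ ({a, b} : Finset Ω).card = 2) :
    tau H A hA (Quot.mk _ ⟨{a, b}, pf⟩) = {cls H A a ha, cls H A b hb} := by
  show Finset.image _ _ = _
  ext q
  rw [Finset.mem_image]
  constructor
  · rintro ⟨x, _, rfl⟩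
    rcases Finset.mem_insert.mp x.prop with h1 | h1
    · exact Finset.mem_insert.mpr (Or.inl (cls_congr H A _ _ _ _ h1))
    · exact Finset.mem_insert.mpr (Or.inr (by
        rw [Finset.mem_singleton]
        exact cls_congr H A _ _ _ _ (Finset.mem_singleton.mp h1)))
  · intro hq
    rcases Finset.mem_insert.mp hq with h1 | h1
    · exact ⟨⟨a, Finset.mem_insert_self _ _⟩, Finset.mem_attach _ _, by rw [h1]⟩
    · refine ⟨⟨b, Finset.mem_insert.mpr (Or.inr (Finset.mem_singleton_self b))⟩,
        Finset.mem_attach _ _, ?_⟩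
      rw [Finset.mem_singleton.mp h1]

lemma pair_subset {a b : Ω} (ha : a ∈ A) (hb : b ∈ A) : ({a, b} : Finset Ω) ⊆ A := by
  intro x hx
  rcases Finset.mem_insert.mp hx with h1 | h1
  · exact h1 ▸ ha
  · exact (Finset.mem_singleton.mp h1) ▸ hb

include hA in
theorem transitive_of_card_eq
    (hnofix : ∀ a ∈ A, ∃ h : H, (h : Equiv.Perm Ω) a ≠ a)
    (hcard : Nat.card (OrbT H (fun S : Finset Ω => S ⊆ A ∧ S.card = 2))
        = Nat.card (OrbT H (fun S : Finset Ω => S ⊆ A ∧ S.card = 1))) :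
    ∀ (a : Ω) (ha : a ∈ A) (b : Ω) (hb : b ∈ A), cls H A a ha = cls H A b hb := by
  by_contra hcon
  push_neg at hcon
  obtain ⟨a₀, ha₀, b₀, hb₀, hne⟩ := hcon
  have hab₀ : a₀ ≠ b₀ := by rintro rfl; exact hne (cls_congr H A _ _ _ _ rfl)
  have hpure : ∀ q : OrbT H (fun S : Finset Ω => S ⊆ A ∧ S.card = 1),
      ∃ p : OrbT H (fun S : Finset Ω => S ⊆ A ∧ S.card = 2), tau H A hA p = {q} := by
    intro q
    obtain ⟨a, ha, rfl⟩ := exists_cls H A q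
    obtain ⟨h, hh⟩ := hnofix a ha
    have hha : (h : Equiv.Perm Ω) a ∈ A := hA h a ha
    refine ⟨Quot.mk _ ⟨{a, (h : Equiv.Perm Ω) a},
      ⟨pair_subset A ha hha, Finset.card_pair (Ne.symm hh)⟩⟩, ?_⟩
    rw [tau_pair H A hA a _ ha hha _]
    rw [cls_smul H A hA h a ha hha]
    exact Finset.insert_eq_self.mpr (Finset.mem_singleton_self _)
  choose pp hpp using hpure
  set pmix : OrbT H (fun S : Finset Ω => S ⊆ A ∧ S.card = 2) :=
    Quot.mk _ ⟨{a₀, b₀}, ⟨pair_subset A ha₀ hb₀, Finset.card_pair hab₀⟩⟩ with hpmix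
  have htmix : tau H A hA pmix = {cls H A a₀ ha₀, cls H A b₀ hb₀} :=
    tau_pair H A hA a₀ b₀ ha₀ hb₀ _
  have hinj : Function.Injective (Sum.elim pp (fun _ : Unit => pmix)) := by
    rintro (q | u) (q' | u') hqq <;>
      simp only [Sum.elim_inl, Sum.elim_inr] at hqq
    · have h2 := congrArg (tau H A hA) hqq
      rw [hpp, hpp] at h2
      rw [Finset.singleton_inj.mp h2]
    · exfalso
      have h2 := congrArg (tau H A hA) hqq
      rw [hpp, htmix] at h2
      have h3 : ({cls H A a₀ ha₀, cls H A b₀ hb₀} : Finset _).card = 2 :=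
        Finset.card_pair hne
      rw [← h2] at h3
      simp at h3
    · exfalso
      have h2 := congrArg (tau H A hA) hqq
      rw [hpp, htmix] at h2
      have h3 : ({cls H A a₀ ha₀, cls H A b₀ hb₀} : Finset _).card = 2 :=
        Finset.card_pair hne
      rw [h2] at h3
      simp at h3
    · rfl
  have hle := Nat.card_le_card_of_injective _ hinj
  rw [Nat.card_sum] at hle
  simp only [Nat.card_unique] at hle
  omega

end Trans
end Orb

/-- Lemma 3.5(2): if `H ≤ S_n` (`n ≥ 7`) fixes pointwise a set `B` of cardinality `r ≥ 1`,
`A` is the complement of `B`, `H` has no fixed points in `A`, and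
`O_{r+1}(H) = ⋯ = O_d(H)` for some `r + 1 < d ≤ (n-r)/2`, then `H` acts
`d`-homogeneously on `A`. -/
theorem stmt6 (n r d : ℕ) (hn : 7 ≤ n)
    (H : Subgroup (Equiv.Perm (Fin n))) (B : Finset (Fin n))
    (hBcard : B.card = r) (hr : 1 ≤ r)
    (hfix : ∀ h ∈ H, ∀ b ∈ B, h b = b)
    (hnofix : ∀ a ∈ Bᶜ, ∃ h ∈ H, h a ≠ a)
    (hd1 : r + 1 < d) (hd2 : 2 * d ≤ n - r)
    (hO : ∀ k, r + 1 ≤ k → k ≤ d →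
      numOrbits H (fun S : Finset (Fin n) => S.card = k)
        = numOrbits H (fun S : Finset (Fin n) => S.card = r + 1)) :
    IsHomogeneousOn H Bᶜ d := by
  classical
  have hrn : r ≤ n := by
    rw [← hBcard]
    simpa using Finset.card_le_card (Finset.subset_univ B) |>.trans (by simp)
  have hAcard : (Bᶜ : Finset (Fin n)).card = n - r := by
    rw [Finset.card_compl, hBcard, Fintype.card_fin]
  have hfix' : ∀ h : H, ∀ b ∈ B, ((h : Equiv.Perm (Fin n))) b = b :=
    fun h => hfix h.val h.prop
  have hA : ∀ h : H, ∀ a ∈ Bᶜ, ((h : Equiv.Perm (Fin n))) a ∈ Bᶜ := by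
    intro h a ha
    rw [Finset.mem_compl] at ha ⊢
    intro hmem
    exact ha ((apply_mem_B_iff H B hfix' h a).mp hmem)
  set o : ℕ → ℕ :=
    fun m => numOrbits H (fun S : Finset (Fin n) => S ⊆ Bᶜ ∧ S.card = m) with ho
  -- step 1: o m = o (m+1) for 1 ≤ m, m + 1 ≤ d
  have hkey : ∀ m, 1 ≤ m → m + 1 ≤ d → o m = o (m+1) := by
    intro m h1 h2
    set k := min (m + r) (d - 1) with hkdef
    have hk1 : r + 1 ≤ k := by omega
    have hk2 : k + 1 ≤ d := by omega
    have hkB : B.card ≤ k := by omega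
    have hkB1 : B.card ≤ k + 1 := by omega
    have hmk : m ≤ k := by omega
    obtain ⟨J₀, hJ₀B, hJ₀card⟩ :=
      Finset.exists_subset_card_eq (show k - m ≤ B.card by omega)
    have hOeq : numOrbits H (fun S : Finset (Fin n) => S.card = k)
        = numOrbits H (fun S : Finset (Fin n) => S.card = (k+1)) := by
      rw [hO (k+1) (by omega) (by omega), hO k (by omega) (by omega)]
    rw [decomp H B hfix' (k+1) hkB1, decomp H B hfix' k hkB] at hOeq
    have hpt : ∀ J ∈ B.powerset,
        numOrbits H (fun S : Finset (Fin n) => S ⊆ Bᶜ ∧ S.card = k - J.card)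
        ≤ numOrbits H (fun S : Finset (Fin n) => S ⊆ Bᶜ ∧ S.card = (k+1) - J.card) := by
      intro J hJ
      have hJr : J.card ≤ r := by
        rw [← hBcard]; exact Finset.card_le_card (Finset.mem_powerset.mp hJ)
      have e1 : (k+1) - J.card = (k - J.card) + 1 := by omega
      rw [e1, numOrbits_eq, numOrbits_eq]
      exact LW_mono H Bᶜ hA (k - J.card) (by omega) (by omega)
    have hterm := (Finset.sum_eq_sum_iff_of_le hpt).mp hOeq
    have hJ0 := hterm J₀ (Finset.mem_powerset.mpr hJ₀B)
    rw [hJ₀card] at hJ0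
    have e2 : k - (k - m) = m := by omega
    have e3 : (k+1) - (k - m) = m + 1 := by omega
    rw [e2, e3] at hJ0
    exact hJ0
  -- step 2: chain o 1 = o m for 1 ≤ m ≤ d
  have hchain : ∀ m, 1 ≤ m → m ≤ d → o 1 = o m := by
    intro m
    induction m with
    | zero => omega
    | succ p ih =>
      intro h1 h2
      by_cases hp : 1 ≤ p
      · rw [ih hp (by omega)]
        exact hkey p hp (by omega)
      · have hp0 : p = 0 := by omega
        subst hp0
        rfl
  -- step 3: transitivity on points of A
  have hnofix' : ∀ a ∈ Bᶜ, ∃ h : H, ((h : Equiv.Perm (Fin n))) a ≠ a := by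
    intro a ha
    obtain ⟨g, hgH, hgne⟩ := hnofix a ha
    exact ⟨⟨g, hgH⟩, hgne⟩
  have h21 : Nat.card (OrbT H (fun S : Finset (Fin n) => S ⊆ Bᶜ ∧ S.card = 2))
      = Nat.card (OrbT H (fun S : Finset (Fin n) => S ⊆ Bᶜ ∧ S.card = 1)) := by
    have := hchain 2 (by omega) (by omega)
    rw [ho] at this
    simp only [numOrbits_eq] at this
    exact this.symm
  have htr := transitive_of_card_eq H Bᶜ hA hnofix' h21
  -- step 4: Q1 has exactly one element
  have hAne : ∃ a, a ∈ (Bᶜ : Finset (Fin n)) := by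
    have : 0 < (Bᶜ : Finset (Fin n)).card := by omega
    obtain ⟨a, ha⟩ := Finset.card_pos.mp this
    exact ⟨a, ha⟩
  obtain ⟨a₀, ha₀⟩ := hAne
  have hQ1sub : Subsingleton (OrbT H (fun S : Finset (Fin n) => S ⊆ Bᶜ ∧ S.card = 1)) := by
    constructor
    intro q q'
    obtain ⟨a, ha, rfl⟩ := exists_cls H Bᶜ q
    obtain ⟨b, hb, rfl⟩ := exists_cls H Bᶜ q'
    exact htr a ha b hb
  have hQ1 : Nat.card (OrbT H (fun S : Finset (Fin n) => S ⊆ Bᶜ ∧ S.card = 1)) = 1 :=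
    Nat.card_eq_one_iff_unique.mpr ⟨hQ1sub, ⟨cls H Bᶜ a₀ ha₀⟩⟩
  -- step 5: Qd has exactly one element
  have hQd : Nat.card (OrbT H (fun S : Finset (Fin n) => S ⊆ Bᶜ ∧ S.card = d)) = 1 := by
    have := hchain d (by omega) le_rfl
    rw [ho] at this
    simp only [numOrbits_eq] at this
    rw [← this, hQ1]
  have hQdsub : Subsingleton (OrbT H (fun S : Finset (Fin n) => S ⊆ Bᶜ ∧ S.card = d)) :=
    (Nat.card_eq_one_iff_unique.mp hQd).1
  -- conclude
  intro S T hSA hTA hScard hTcard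
  have hS' : S ⊆ Bᶜ ∧ S.card = d := ⟨hSA, hScard⟩
  have hT' : T ⊆ Bᶜ ∧ T.card = d := ⟨hTA, hTcard⟩
  have hq : (Quot.mk _ ⟨S, hS'⟩ :
        OrbT H (fun S : Finset (Fin n) => S ⊆ Bᶜ ∧ S.card = d))
      = Quot.mk _ ⟨T, hT'⟩ := @Subsingleton.elim _ hQdsub _ _
  rw [Quot.eq] at hq
  have hrel := ((rel_equivalence H (fun S : Finset (Fin n) =>
    S ⊆ Bᶜ ∧ S.card = d)).eqvGen_iff).mp hq
  obtain ⟨h, he⟩ := hrel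
  exact ⟨h.val, h.prop, he⟩
end

section
/- Let n ≥ 8 and let H ≤ S_n be a subgroup such that {n−1, n} is an orbit of H on {1,…,n}. Let d be an integer with 3 ≤ d ≤ (n−2)/2 such that O_2(H) = O_3(H) = ⋯ = O_d(H). Then H acts d-homogeneously on {1,…,n−2}. -/
open Pointwise
open Finset

open Pointwise

set_option linter.unusedSectionVars false
section Aux
variable {Ω : Type*} [Fintype Ω] [DecidableEq Ω]
variable (G : Type*) [Group G] [MulAction G Ω]

/-- relation: same orbit, for finsets satisfying `P` -/
def orel (P : Finset Ω → Prop) : {S : Finset Ω // P S} → {S : Finset Ω // P S} → Prop :=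
  fun S T => ∃ g : G, g • S.val = T.val

theorem orel_equiv (P : Finset Ω → Prop) : Equivalence (orel G P) := by
  constructor
  · exact fun S => ⟨1, one_smul _ _⟩
  · rintro S T ⟨g, hg⟩; exact ⟨g⁻¹, by rw [← hg, inv_smul_smul]⟩
  · rintro S T U ⟨g, hg⟩ ⟨h, hh⟩; exact ⟨h * g, by rw [mul_smul, hg, hh]⟩

noncomputable def nO (P : Finset Ω → Prop) : ℕ := Nat.card (Quot (orel G P))

instance (P : Finset Ω → Prop) : Finite (Quot (orel G P)) :=
  Finite.of_surjective (Quot.mk _) Quot.mk_surjective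

theorem orel_mk_eq_iff (P : Finset Ω → Prop) (S T : {S : Finset Ω // P S}) :
    Quot.mk (orel G P) S = Quot.mk (orel G P) T ↔ orel G P S T := by
  rw [Quot.eq]
  exact (orel_equiv G P).eqvGen_iff

theorem nO_eq_one_iff (P : Finset Ω → Prop) (hne : ∃ S, P S) :
    nO G P = 1 ↔ ∀ S T : {S : Finset Ω // P S}, orel G P S T := by
  rw [nO, Nat.card_eq_one_iff_unique]
  constructor
  · rintro ⟨hsub, -⟩ S T
    rw [← orel_mk_eq_iff]
    exact hsub.elim _ _
  · intro h
    obtain ⟨S, hS⟩ := hne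
    refine ⟨⟨fun x y => ?_⟩, ⟨Quot.mk _ ⟨S, hS⟩⟩⟩
    induction x using Quot.ind
    induction y using Quot.ind
    exact Quot.sound (h _ _)

theorem one_le_nO (P : Finset Ω → Prop) (hne : ∃ S, P S) : 1 ≤ nO G P := by
  obtain ⟨S, hS⟩ := hne
  have : Nonempty (Quot (orel G P)) := ⟨Quot.mk _ ⟨S, hS⟩⟩
  exact Nat.one_le_iff_ne_zero.2 (Nat.card_ne_zero.2 ⟨this, inferInstance⟩)

end Aux


section Count
variable {Ω : Type*} [Fintype Ω] [DecidableEq Ω]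

/-- number of (m+1)-subsets of A containing a fixed m-subset T -/
theorem count_up (A T : Finset Ω) (m : ℕ) (hTA : T ⊆ A) (hT : T.card = m) :
    ((A.powersetCard (m+1)).filter (fun S => T ⊆ S)).card = A.card - T.card := by
  rw [← Finset.card_sdiff_of_subset hTA]
  symm
  apply Finset.card_bij (fun x _ => insert x T)
  · intro x hx
    rw [Finset.mem_sdiff] at hx
    rw [Finset.mem_filter, Finset.mem_powersetCard]
    exact ⟨⟨Finset.insert_subset hx.1 hTA, by rw [Finset.card_insert_of_notMem hx.2, hT]⟩,
      Finset.subset_insert _ _⟩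
  · intro x hx y hy h
    rw [Finset.mem_sdiff] at hx hy
    have := Finset.mem_insert_self x T
    rw [h, Finset.mem_insert] at this
    rcases this with h' | h'
    · exact h'
    · exact absurd h' hx.2
  · intro S hS
    rw [Finset.mem_filter, Finset.mem_powersetCard] at hS
    obtain ⟨⟨hSA, hScard⟩, hTS⟩ := hS
    have h1 : (S \ T).card = 1 := by
      rw [Finset.card_sdiff_of_subset hTS, hScard, hT]; omega
    obtain ⟨x, hx⟩ := Finset.card_eq_one.1 h1
    refine ⟨x, Finset.mem_sdiff.2 ⟨hSA (by
      have : x ∈ S \ T := by rw [hx]; exact Finset.mem_singleton_self x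
      exact (Finset.mem_sdiff.1 this).1), (Finset.mem_sdiff.1 (by
      rw [hx]; exact Finset.mem_singleton_self x : x ∈ S \ T)).2⟩, ?_⟩
    have : T ∪ S \ T = S := Finset.union_sdiff_of_subset hTS
    rw [hx] at this
    rw [← this, Finset.union_comm]
    rfl

/-- the (m)-subsets of A contained in both T and T' -/
theorem count_down (A T T' : Finset Ω) (m : ℕ) (hT : T ⊆ A) :
    ((A.powersetCard m).filter (fun R => R ⊆ T ∧ R ⊆ T')) = (T ∩ T').powersetCard m := by
  ext R
  simp only [Finset.mem_filter, Finset.mem_powersetCard, Finset.subset_inter_iff]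
  constructor
  · rintro ⟨⟨-, h2⟩, h3⟩; exact ⟨h3, h2⟩
  · rintro ⟨⟨h1, h2⟩, h3⟩; exact ⟨⟨(Finset.subset_inter h1 h2).trans (Finset.inter_subset_left.trans hT), h3⟩, h1, h2⟩

end Count

section Count2
variable {Ω : Type*} [Fintype Ω] [DecidableEq Ω]

theorem count_pointwise (A : Finset Ω) (j : ℕ) (T T' : Finset Ω)
    (hT : T ∈ A.powersetCard (j+1)) (hT' : T' ∈ A.powersetCard (j+1)) :
    (((A.powersetCard (j+2)).filter (fun S => T ⊆ S ∧ T' ⊆ S)).card : ℚ)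
      = (((A.powersetCard j).filter (fun R => R ⊆ T ∧ R ⊆ T')).card : ℚ)
        + (if T' = T then (A.card : ℚ) - (2*(j+1)) else 0) := by
  rw [Finset.mem_powersetCard] at hT hT'
  obtain ⟨hTA, hTc⟩ := hT
  obtain ⟨hT'A, hT'c⟩ := hT'
  rw [count_down A T T' j hTA, Finset.card_powersetCard]
  by_cases heq : T' = T
  · subst heq
    rw [if_pos rfl]
    have h1 : ((A.powersetCard (j+2)).filter (fun S => T' ⊆ S ∧ T' ⊆ S))
        = ((A.powersetCard (j+1+1)).filter (fun S => T' ⊆ S)) := by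
      apply Finset.filter_congr; intro S _; simp
    rw [h1, count_up A T' (j+1) hT'A hT'c, hT'c, Finset.inter_self, hT'c,
      Nat.choose_succ_self_right]
    have hle : j + 1 ≤ A.card := hT'c ▸ Finset.card_le_card hT'A
    push_cast [Nat.cast_sub hle]
    ring
  · rw [if_neg heq, add_zero]
    have hi : (T ∩ T').card ≤ j := by
      by_contra hcon
      push_neg at hcon
      have h1 : T.card ≤ (T ∩ T').card := by omega
      have h2 : T ∩ T' = T := Finset.eq_of_subset_of_card_le Finset.inter_subset_left h1
      have h3 : T ⊆ T' := by rw [← h2]; exact Finset.inter_subset_right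
      exact heq (Finset.eq_of_subset_of_card_le h3 (by omega)).symm
    have hu : (T ∪ T').card = 2*(j+1) - (T ∩ T').card := by
      have := Finset.card_union_add_card_inter T T'
      omega
    have hfilt : ((A.powersetCard (j+2)).filter (fun S => T ⊆ S ∧ T' ⊆ S))
        = ((A.powersetCard (j+2)).filter (fun S => T ∪ T' ⊆ S)) := by
      apply Finset.filter_congr; intro S _; simp [Finset.union_subset_iff]
    rw [hfilt]
    by_cases hij : (T ∩ T').card = j
    · have huc : (T ∪ T').card = j + 2 := by omega
      have : ((A.powersetCard (j+2)).filter (fun S => T ∪ T' ⊆ S)) = {T ∪ T'} := by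
        ext S
        rw [Finset.mem_filter, Finset.mem_powersetCard, Finset.mem_singleton]
        constructor
        · rintro ⟨⟨hSA, hSc⟩, hsub⟩
          exact (Finset.eq_of_subset_of_card_le hsub (by omega)).symm
        · rintro rfl
          exact ⟨⟨Finset.union_subset hTA hT'A, huc⟩, le_refl _⟩
      rw [this, Finset.card_singleton, hij, Nat.choose_self]
    · have hlt : (T ∩ T').card < j := by omega
      have : ((A.powersetCard (j+2)).filter (fun S => T ∪ T' ⊆ S)) = ∅ := by
        rw [Finset.filter_eq_empty_iff]
        intro S hS
        rw [Finset.mem_powersetCard] at hS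
        intro hsub
        have := Finset.card_le_card hsub
        omega
      rw [this, Nat.choose_eq_zero_of_lt hlt]
      simp
end Count2

section Master
variable {Ω : Type*} [Fintype Ω] [DecidableEq Ω]

theorem double_sum (s t : Finset (Finset Ω)) (P : Finset Ω → Finset Ω → Prop)
    [∀ x y : Finset Ω, Decidable (P x y)] (F : Finset Ω → ℚ) :
    ∑ S ∈ s, (∑ T ∈ t, if P T S then F T else 0)^2
      = ∑ T ∈ t, ∑ T' ∈ t, ((s.filter (fun S => P T S ∧ P T' S)).card : ℚ) * (F T * F T') :=
  calc
    ∑ S ∈ s, (∑ T ∈ t, if P T S then F T else 0)^2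
        = ∑ S ∈ s, ∑ T ∈ t, ∑ T' ∈ t, if P T S ∧ P T' S then F T * F T' else 0 := by
          refine Finset.sum_congr rfl fun S _ => ?_
          rw [sq, Finset.sum_mul_sum]
          refine Finset.sum_congr rfl fun T _ => Finset.sum_congr rfl fun T' _ => ?_
          rw [ite_zero_mul_ite_zero]
    _ = ∑ T ∈ t, ∑ T' ∈ t, ∑ S ∈ s, if P T S ∧ P T' S then F T * F T' else 0 := by
          rw [Finset.sum_comm]
          exact Finset.sum_congr rfl fun T _ => Finset.sum_comm
    _ = ∑ T ∈ t, ∑ T' ∈ t, ((s.filter (fun S => P T S ∧ P T' S)).card : ℚ) * (F T * F T') := by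
          refine Finset.sum_congr rfl fun T _ => Finset.sum_congr rfl fun T' _ => ?_
          rw [← Finset.sum_filter, Finset.sum_const, nsmul_eq_mul]

theorem master (A : Finset Ω) (j : ℕ) (F : Finset Ω → ℚ) :
    ∑ S ∈ A.powersetCard (j+2), (∑ T ∈ A.powersetCard (j+1), if T ⊆ S then F T else 0)^2
      = ∑ R ∈ A.powersetCard j, (∑ T ∈ A.powersetCard (j+1), if R ⊆ T then F T else 0)^2
        + ((A.card : ℚ) - (2*(j+1))) * ∑ T ∈ A.powersetCard (j+1), (F T)^2 := by
  rw [double_sum (A.powersetCard (j+2)) (A.powersetCard (j+1)) (fun T S => T ⊆ S) F,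
    double_sum (A.powersetCard j) (A.powersetCard (j+1)) (fun T R => R ⊆ T) F]
  rw [Finset.mul_sum, ← Finset.sum_add_distrib]
  refine Finset.sum_congr rfl fun T hT => ?_
  have h2 : ((A.card : ℚ) - (2*(j+1))) * (F T)^2
      = ∑ T' ∈ A.powersetCard (j+1),
          if T' = T then ((A.card : ℚ) - (2*(j+1))) * (F T * F T') else 0 := by
    rw [Finset.sum_ite_eq' (A.powersetCard (j+1)) T
      (fun T' => ((A.card : ℚ) - (2*(j+1))) * (F T * F T')), if_pos hT, sq]
  rw [h2, ← Finset.sum_add_distrib]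
  refine Finset.sum_congr rfl fun T' hT' => ?_
  have hc := count_pointwise A j T T' hT hT'
  rw [hc]
  split_ifs with h
  · ring
  · ring
end Master

section LWsec
open scoped Classical
variable {Ω : Type*} [Fintype Ω] [DecidableEq Ω]
variable (G : Type*) [Group G] [MulAction G Ω]

def lev (A : Finset Ω) (k : ℕ) : Finset Ω → Prop := fun S => S ⊆ A ∧ S.card = k

instance (A : Finset Ω) (k : ℕ) : DecidablePred (lev A k) :=
  fun _ => instDecidableAnd

noncomputable def Eext (A : Finset Ω) (k : ℕ) (f : {S : Finset Ω // lev A k S} → ℚ) :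
    Finset Ω → ℚ := fun T => if h : lev A k T then f ⟨T, h⟩ else 0

noncomputable def upMap (A : Finset Ω) (k : ℕ) :
    ({S : Finset Ω // lev A k S} → ℚ) →ₗ[ℚ] ({S : Finset Ω // lev A (k+1) S} → ℚ) where
  toFun f S := ∑ T ∈ A.powersetCard k, if T ⊆ S.1 then Eext A k f T else 0
  map_add' f g := by
    funext S
    show (∑ T ∈ A.powersetCard k, if T ⊆ S.1 then Eext A k (f + g) T else 0)
      = (∑ T ∈ A.powersetCard k, if T ⊆ S.1 then Eext A k f T else 0)
        + (∑ T ∈ A.powersetCard k, if T ⊆ S.1 then Eext A k g T else 0)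
    rw [← Finset.sum_add_distrib]
    refine Finset.sum_congr rfl fun T _ => ?_
    by_cases h : T ⊆ S.1
    · simp only [if_pos h, Eext]
      by_cases h2 : lev A k T
      · simp [h2]
      · simp [h2]
    · simp [h]
  map_smul' c f := by
    funext S
    show (∑ T ∈ A.powersetCard k, if T ⊆ S.1 then Eext A k (c • f) T else 0)
      = (c • fun S : {S : Finset Ω // lev A (k+1) S} =>
          ∑ T ∈ A.powersetCard k, if T ⊆ S.1 then Eext A k f T else 0) S
    simp only [RingHom.id_apply, Pi.smul_apply, smul_eq_mul, Finset.mul_sum]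
    refine Finset.sum_congr rfl fun T _ => ?_
    by_cases h : T ⊆ S.1
    · simp only [if_pos h, Eext]
      by_cases h2 : lev A k T
      · simp [h2]
      · simp [h2]
    · simp [h]

theorem sum_lev (A : Finset Ω) (k : ℕ) (g : Finset Ω → ℚ) :
    ∑ T ∈ A.powersetCard k, g T = ∑ S : {S : Finset Ω // lev A k S}, g S.1 :=
  Finset.sum_subtype (A.powersetCard k) (fun T => Finset.mem_powersetCard) g

theorem sum_sq_ext (A : Finset Ω) (k : ℕ) (f : {S : Finset Ω // lev A k S} → ℚ) :
    ∑ T ∈ A.powersetCard k, (Eext A k f T)^2 = ∑ S : {S : Finset Ω // lev A k S}, (f S)^2 := by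
  rw [sum_lev A k (fun T => (Eext A k f T)^2)]
  refine Finset.sum_congr rfl fun S _ => ?_
  rw [Eext, dif_pos S.2]

theorem up_norm (A : Finset Ω) (j : ℕ) (f : {S : Finset Ω // lev A (j+1) S} → ℚ) :
    ∑ S : {S : Finset Ω // lev A (j+2) S}, (upMap A (j+1) f S)^2
      = ∑ R ∈ A.powersetCard j,
          (∑ T ∈ A.powersetCard (j+1), if R ⊆ T then Eext A (j+1) f T else 0)^2
        + ((A.card : ℚ) - (2*(j+1))) * ∑ S : {S : Finset Ω // lev A (j+1) S}, (f S)^2 := by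
  have hm := master A j (Eext A (j+1) f)
  rw [sum_lev A (j+2) (fun S => (∑ T ∈ A.powersetCard (j+1),
      if T ⊆ S then Eext A (j+1) f T else 0)^2), sum_sq_ext A (j+1) f] at hm
  exact hm

theorem upMap_inj (A : Finset Ω) (j : ℕ) (hc : 2*(j+1) < A.card)
    (f : {S : Finset Ω // lev A (j+1) S} → ℚ) (h : upMap A (j+1) f = 0) : f = 0 := by
  have h0 : ∑ S : {S : Finset Ω // lev A (j+2) S}, (upMap A (j+1) f S)^2 = 0 := by
    rw [h]; simp
  rw [up_norm] at h0
  have hB : (0:ℚ) ≤ ∑ R ∈ A.powersetCard j,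
      (∑ T ∈ A.powersetCard (j+1), if R ⊆ T then Eext A (j+1) f T else 0)^2 :=
    Finset.sum_nonneg fun _ _ => sq_nonneg _
  have hN : (0:ℚ) ≤ ∑ S : {S : Finset Ω // lev A (j+1) S}, (f S)^2 :=
    Finset.sum_nonneg fun _ _ => sq_nonneg _
  have hcpos : (0:ℚ) < (A.card : ℚ) - (2*(j+1)) := by
    have : ((2*(j+1) : ℕ) : ℚ) < ((A.card : ℕ) : ℚ) := by exact_mod_cast hc
    push_cast at this ⊢
    linarith
  have hzero : ∑ S : {S : Finset Ω // lev A (j+1) S}, (f S)^2 = 0 := by nlinarith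
  funext S
  have := (Finset.sum_eq_zero_iff_of_nonneg
    (fun x (_ : x ∈ Finset.univ) => sq_nonneg (f x))).1 hzero S (Finset.mem_univ S)
  have := sq_eq_zero_iff.1 this
  simpa using this

noncomputable def chi (A : Finset Ω) (k : ℕ) (o : Quot (orel G (lev A k))) :
    {S : Finset Ω // lev A k S} → ℚ :=
  fun S => if Quot.mk (orel G (lev A k)) S = o then 1 else 0

theorem chi_li (A : Finset Ω) (k : ℕ) :
    LinearIndependent ℚ (chi G A k) := by
  letI := Fintype.ofFinite (Quot (orel G (lev A k)))
  rw [Fintype.linearIndependent_iff]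
  intro c hc o
  obtain ⟨S, rfl⟩ := Quot.exists_rep o
  have h := congrFun hc S
  simp only [Finset.sum_apply, Pi.smul_apply, chi, smul_eq_mul, Pi.zero_apply,
    mul_ite, mul_one, mul_zero] at h
  rwa [Finset.sum_ite_eq Finset.univ (Quot.mk (orel G (lev A k)) S) c,
    if_pos (Finset.mem_univ _)] at h

def IsInv (A : Finset Ω) (k : ℕ) (v : {S : Finset Ω // lev A k S} → ℚ) : Prop :=
  ∀ (g : G) (S : {S : Finset Ω // lev A k S}) (h : lev A k (g • S.1)), v ⟨g • S.1, h⟩ = v S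

theorem lev_smul (A : Finset Ω) (k : ℕ) (hA : ∀ g : G, g • A = A) (g : G) (S : Finset Ω)
    (h : lev A k S) : lev A k (g • S) := by
  obtain ⟨h1, h2⟩ := h
  constructor
  · rw [← hA g]
    exact Finset.smul_finset_subset_smul_finset h1
  · rw [Finset.card_smul_finset, h2]

theorem chi_inv (A : Finset Ω) (k : ℕ) (o : Quot (orel G (lev A k))) :
    IsInv G A k (chi G A k o) := by
  intro g S h
  have : Quot.mk (orel G (lev A k)) (⟨g • S.1, h⟩ : {S : Finset Ω // lev A k S})
      = Quot.mk (orel G (lev A k)) S := by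
    apply Quot.sound
    exact ⟨g⁻¹, by simp⟩
  rw [chi, chi, this]

theorem upMap_inv (A : Finset Ω) (k : ℕ) (hA : ∀ g : G, g • A = A)
    (v : {S : Finset Ω // lev A k S} → ℚ) (hv : IsInv G A k v) :
    IsInv G A (k+1) (upMap A k v) := by
  intro g S h
  show (∑ T ∈ A.powersetCard k, if T ⊆ g • S.1 then Eext A k v T else 0)
      = ∑ T ∈ A.powersetCard k, if T ⊆ S.1 then Eext A k v T else 0
  symm
  apply Finset.sum_nbij' (fun T => g • T) (fun T => g⁻¹ • T)
  · intro T hT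
    rw [Finset.mem_powersetCard] at hT ⊢
    exact lev_smul G A k hA g T hT
  · intro T hT
    rw [Finset.mem_powersetCard] at hT ⊢
    exact lev_smul G A k hA g⁻¹ T hT
  · intro T _; simp
  · intro T _; simp
  · intro T hT
    have hlev : lev A k T := Finset.mem_powersetCard.1 hT
    have hiff : (g • T ⊆ g • S.1) ↔ (T ⊆ S.1) := Finset.smul_finset_subset_smul_finset_iff
    have hval : Eext A k v (g • T) = Eext A k v T := by
      simp only [Eext]
      rw [dif_pos hlev, dif_pos (lev_smul G A k hA g T hlev)]
      exact hv g ⟨T, hlev⟩ (lev_smul G A k hA g T hlev)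
    rw [hval]
    by_cases hsub : T ⊆ S.1
    · rw [if_pos hsub, if_pos (hiff.2 hsub)]
    · rw [if_neg hsub, if_neg (fun hcon => hsub (hiff.1 hcon))]

theorem inv_mem_span (A : Finset Ω) (k : ℕ) (v : {S : Finset Ω // lev A k S} → ℚ)
    (hv : IsInv G A k v) :
    v ∈ Submodule.span ℚ (Set.range (chi G A k)) := by
  letI := Fintype.ofFinite (Quot (orel G (lev A k)))
  have hrep : v = ∑ o : Quot (orel G (lev A k)), v (Quot.out o) • chi G A k o := by
    funext S
    rw [Finset.sum_apply]
    simp only [Pi.smul_apply, chi, smul_eq_mul, mul_ite, mul_one, mul_zero]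
    rw [Finset.sum_ite_eq Finset.univ (Quot.mk (orel G (lev A k)) S)
      (fun o => v (Quot.out o)), if_pos (Finset.mem_univ _)]
    have hout : Quot.mk (orel G (lev A k)) (Quot.out (Quot.mk (orel G (lev A k)) S))
        = Quot.mk (orel G (lev A k)) S := Quot.out_eq _
    have hrel : orel G (lev A k) (Quot.out (Quot.mk (orel G (lev A k)) S)) S := by
      rw [Quot.eq] at hout
      exact (Equivalence.eqvGen_iff (by
        constructor
        · exact fun X => ⟨1, one_smul _ _⟩
        · rintro X Y ⟨g, hg⟩; exact ⟨g⁻¹, by rw [← hg, inv_smul_smul]⟩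
        · rintro X Y Z ⟨g, hg⟩ ⟨g', hg'⟩; exact ⟨g' * g, by rw [mul_smul, hg, hg']⟩)).1 hout
    obtain ⟨g, hg⟩ := hrel
    set X := Quot.out (Quot.mk (orel G (lev A k)) S) with hX
    have h2 : lev A k (g • X.1) := hg ▸ S.2
    have h3 := hv g X h2
    have hSX : S = ⟨g • X.1, h2⟩ := Subtype.ext hg.symm
    rw [hSX, h3]
  rw [hrep]
  exact Submodule.sum_mem _ fun o _ =>
    Submodule.smul_mem _ _ (Submodule.subset_span ⟨o, rfl⟩)

theorem LW_step (A : Finset Ω) (j : ℕ) (hA : ∀ g : G, g • A = A) (hc : 2*(j+1) < A.card) :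
    Nat.card (Quot (orel G (lev A (j+1)))) ≤ Nat.card (Quot (orel G (lev A (j+2)))) := by
  letI := Fintype.ofFinite (Quot (orel G (lev A (j+1))))
  letI := Fintype.ofFinite (Quot (orel G (lev A (j+2))))
  rw [Nat.card_eq_fintype_card, Nat.card_eq_fintype_card]
  set M := Submodule.span ℚ (Set.range (chi G A (j+2))) with hM
  have hker : LinearMap.ker (upMap A (j+1) :
      ({S : Finset Ω // lev A (j+1) S} → ℚ) →ₗ[ℚ] _) = ⊥ :=
    LinearMap.ker_eq_bot'.2 fun f hf => upMap_inj A j hc f hf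
  have hli : LinearIndependent ℚ
      (fun o => upMap A (j+1) (chi G A (j+1) o)) :=
    (chi_li G A (j+1)).map' _ hker
  have hmem : ∀ o, upMap A (j+1) (chi G A (j+1) o) ∈ M := fun o =>
    inv_mem_span G A (j+2) _ (upMap_inv G A (j+1) hA _ (chi_inv G A (j+1) o))
  have hliM : LinearIndependent ℚ
      (fun o => (⟨upMap A (j+1) (chi G A (j+1) o), hmem o⟩ : M)) := by
    apply LinearIndependent.of_comp M.subtype
    exact hli
  have h1 : Fintype.card (Quot (orel G (lev A (j+1)))) ≤ Module.finrank ℚ M :=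
    hliM.fintype_card_le_finrank
  have h2 : Module.finrank ℚ M ≤ Fintype.card (Quot (orel G (lev A (j+2)))) := by
    refine le_trans (finrank_span_le_card _) ?_
    rw [Set.toFinset_range]
    exact le_trans Finset.card_image_le (by simp)
  exact le_trans h1 h2

end LWsec

section Decomp
open scoped Classical
variable {Ω : Type*} [Fintype Ω] [DecidableEq Ω]
variable (G : Type*) [Group G] [MulAction G Ω]

theorem quot_card_transfer {α β : Type*} [Finite α] [Finite β]
    (r : α → α → Prop) (s : β → β → Prop)
    (hs : Equivalence s) (φ : α → β)
    (h1 : ∀ x y, r x y → s (φ x) (φ y))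
    (h2 : ∀ x y, s (φ x) (φ y) → r x y)
    (h3 : ∀ y, ∃ x, s (φ x) y) :
    Nat.card (Quot r) = Nat.card (Quot s) := by
  apply Nat.card_eq_of_bijective
    (Quot.lift (fun x => Quot.mk s (φ x)) (fun x y h => Quot.sound (h1 x y h)))
  constructor
  · intro x y
    induction x using Quot.ind with | _ x => ?_
    induction y using Quot.ind with | _ y => ?_
    intro h
    have hsrel : s (φ x) (φ y) := by
      rw [Quot.eq] at h
      exact hs.eqvGen_iff.1 h
    exact Quot.sound (h2 x y hsrel)
  · intro q
    induction q using Quot.ind with | _ y => ?_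
    obtain ⟨x, hx⟩ := h3 y
    exact ⟨Quot.mk r x, Quot.sound hx⟩

/-- the classifying predicate: `k`-sets whose intersection with `B` has `i` elements -/
def PiP (B : Finset Ω) (k i : ℕ) : Finset Ω → Prop :=
  fun S => S.card = k ∧ (S ∩ B).card = i

theorem smul_inter_card (B : Finset Ω) (hB : ∀ g : G, g • B = B) (g : G) (S : Finset Ω) :
    ((g • S) ∩ B).card = (S ∩ B).card := by
  conv_lhs => rw [← hB g, ← Finset.smul_finset_inter]
  rw [Finset.card_smul_finset]

theorem smul_compl {B : Finset Ω} (hB : ∀ g : G, g • B = B) (g : G) : g • Bᶜ = Bᶜ := by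
  have key : ∀ (h : G), h • Bᶜ ⊆ Bᶜ := by
    intro h z hz
    rw [Finset.mem_smul_finset] at hz
    obtain ⟨y, hy, rfl⟩ := hz
    rw [Finset.mem_compl] at hy ⊢
    intro hc
    rw [← hB h, Finset.mem_smul_finset] at hc
    obtain ⟨w, hw, hww⟩ := hc
    exact hy ((MulAction.injective h hww) ▸ hw)
  apply Finset.eq_of_subset_of_card_le (key g)
  rw [Finset.card_smul_finset]

theorem partition (B : Finset Ω) (hB : ∀ g : G, g • B = B) (hB2 : B.card = 2) (k : ℕ) :
    Nat.card (Quot (orel G (fun S : Finset Ω => S.card = k)))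
      = Nat.card (Quot (orel G (PiP B k 0))) + Nat.card (Quot (orel G (PiP B k 1)))
        + Nat.card (Quot (orel G (PiP B k 2))) := by
  have hle2 : ∀ S : Finset Ω, (S ∩ B).card ≤ 2 := fun S =>
    hB2 ▸ Finset.card_le_card Finset.inter_subset_right
  let em : ∀ i : ℕ, {S : Finset Ω // PiP B k i S} → Quot (orel G (fun S : Finset Ω => S.card = k)) :=
    fun i S => Quot.mk _ ⟨S.1, S.2.1⟩
  have hsound : ∀ (i : ℕ) (x y : {S : Finset Ω // PiP B k i S}),
      orel G (PiP B k i) x y → em i x = em i y := by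
    rintro i x y ⟨g, hg⟩
    exact Quot.sound ⟨g, hg⟩
  have key : ∀ (i j : ℕ) (x : {S : Finset Ω // PiP B k i S}) (y : {S : Finset Ω // PiP B k j S}),
      em i x = em j y → i = j ∧ ∃ g : G, g • x.1 = y.1 := by
    intro i j x y h
    rw [Quot.eq] at h
    obtain ⟨g, hg⟩ := (orel_equiv G _).eqvGen_iff.1 h
    refine ⟨?_, g, hg⟩
    have h1 := x.2.2
    have h2 := y.2.2
    have h3 : ((g • x.1) ∩ B).card = (x.1 ∩ B).card := smul_inter_card G B hB g x.1
    rw [hg] at h3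
    have h3' : (y.1 ∩ B).card = (x.1 ∩ B).card := h3
    omega
  let F : Quot (orel G (PiP B k 0)) ⊕ Quot (orel G (PiP B k 1)) ⊕ Quot (orel G (PiP B k 2))
      → Quot (orel G (fun S : Finset Ω => S.card = k)) :=
    Sum.elim (Quot.lift (em 0) (hsound 0))
      (Sum.elim (Quot.lift (em 1) (hsound 1)) (Quot.lift (em 2) (hsound 2)))
  have hbij : Function.Bijective F := by
    constructor
    · rintro (q | q | q) (q' | q' | q') h
      · revert h
        induction q using Quot.ind with | _ x => ?_
        induction q' using Quot.ind with | _ y => ?_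
        intro h
        obtain ⟨-, g, hg⟩ := key 0 0 x y h
        exact congrArg Sum.inl (Quot.sound ⟨g, hg⟩)
      · revert h
        induction q using Quot.ind with | _ x => ?_
        induction q' using Quot.ind with | _ y => ?_
        intro h
        exact absurd (key 0 1 x y h).1 (by omega)
      · revert h
        induction q using Quot.ind with | _ x => ?_
        induction q' using Quot.ind with | _ y => ?_
        intro h
        exact absurd (key 0 2 x y h).1 (by omega)
      · revert h
        induction q using Quot.ind with | _ x => ?_
        induction q' using Quot.ind with | _ y => ?_
        intro h
        exact absurd (key 1 0 x y h).1 (by omega)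
      · revert h
        induction q using Quot.ind with | _ x => ?_
        induction q' using Quot.ind with | _ y => ?_
        intro h
        obtain ⟨-, g, hg⟩ := key 1 1 x y h
        exact congrArg (Sum.inr ∘ Sum.inl) (Quot.sound ⟨g, hg⟩)
      · revert h
        induction q using Quot.ind with | _ x => ?_
        induction q' using Quot.ind with | _ y => ?_
        intro h
        exact absurd (key 1 2 x y h).1 (by omega)
      · revert h
        induction q using Quot.ind with | _ x => ?_
        induction q' using Quot.ind with | _ y => ?_
        intro h
        exact absurd (key 2 0 x y h).1 (by omega)
      · revert h
        induction q using Quot.ind with | _ x => ?_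
        induction q' using Quot.ind with | _ y => ?_
        intro h
        exact absurd (key 2 1 x y h).1 (by omega)
      · revert h
        induction q using Quot.ind with | _ x => ?_
        induction q' using Quot.ind with | _ y => ?_
        intro h
        obtain ⟨-, g, hg⟩ := key 2 2 x y h
        exact congrArg (Sum.inr ∘ Sum.inr) (Quot.sound ⟨g, hg⟩)
    · intro q
      induction q using Quot.ind with | _ S => ?_
      have h2 := hle2 S.1
      by_cases h0 : (S.1 ∩ B).card = 0
      · exact ⟨Sum.inl (Quot.mk _ ⟨S.1, S.2, h0⟩), rfl⟩
      by_cases h1 : (S.1 ∩ B).card = 1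
      · exact ⟨Sum.inr (Sum.inl (Quot.mk _ ⟨S.1, S.2, h1⟩)), rfl⟩
      have h2' : (S.1 ∩ B).card = 2 := by omega
      exact ⟨Sum.inr (Sum.inr (Quot.mk _ ⟨S.1, S.2, h2'⟩)), rfl⟩
  have hc := Nat.card_eq_of_bijective F hbij
  rw [Nat.card_sum, Nat.card_sum] at hc
  omega

end Decomp

section Transfers
open scoped Classical
variable {Ω : Type*} [Fintype Ω] [DecidableEq Ω]
variable (G : Type*) [Group G] [MulAction G Ω]

theorem transfer0 (B : Finset Ω) (k : ℕ) :
    Nat.card (Quot (orel G (PiP B k 0))) = Nat.card (Quot (orel G (lev Bᶜ k))) := by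
  have hsub : ∀ S : Finset Ω, (S ∩ B).card = 0 → S ⊆ Bᶜ := by
    intro S h x hx
    rw [Finset.card_eq_zero] at h
    exact Finset.mem_compl.2 fun hxB =>
      Finset.notMem_empty x (h ▸ Finset.mem_inter.2 ⟨hx, hxB⟩)
  have hsub' : ∀ S : Finset Ω, S ⊆ Bᶜ → (S ∩ B).card = 0 := by
    intro S h
    rw [Finset.card_eq_zero, Finset.eq_empty_iff_forall_notMem]
    intro x hx
    rw [Finset.mem_inter] at hx
    exact Finset.mem_compl.1 (h hx.1) hx.2
  refine quot_card_transfer _ _ (orel_equiv _ _)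
    (fun S => ⟨S.1, hsub S.1 S.2.2, S.2.1⟩) ?_ ?_ ?_
  · rintro x y ⟨g, hg⟩
    exact ⟨g, hg⟩
  · rintro x y ⟨g, hg⟩
    exact ⟨g, hg⟩
  · intro y
    exact ⟨⟨y.1, y.2.2, hsub' y.1 y.2.1⟩, ⟨1, one_smul _ _⟩⟩

theorem transfer2 (B : Finset Ω) (hB : ∀ g : G, g • B = B) (hB2 : B.card = 2) (k : ℕ) :
    Nat.card (Quot (orel G (PiP B (k+2) 2))) = Nat.card (Quot (orel G (lev Bᶜ k))) := by
  have hBS : ∀ S : Finset Ω, (S ∩ B).card = 2 → B ⊆ S := by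
    intro S h
    have h2 : S ∩ B = B := Finset.eq_of_subset_of_card_le Finset.inter_subset_right (by omega)
    rw [← h2]
    exact Finset.inter_subset_left
  have hφp : ∀ S : Finset Ω, PiP B (k+2) 2 S → lev Bᶜ k (S \ B) := by
    rintro S ⟨h1, h2⟩
    constructor
    · intro x hx
      rw [Finset.mem_sdiff] at hx
      exact Finset.mem_compl.2 hx.2
    · rw [Finset.card_sdiff_of_subset (hBS S h2), h1, hB2]
      omega
  refine quot_card_transfer _ _ (orel_equiv _ _)
    (fun S => ⟨S.1 \ B, hφp S.1 S.2⟩) ?_ ?_ ?_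
  · rintro x y ⟨g, hg⟩
    exact ⟨g, by show g • (x.1 \ B) = y.1 \ B; rw [Finset.smul_finset_sdiff, hB, hg]⟩
  · rintro x y ⟨g, hg⟩
    have hg' : g • (x.1 \ B) = y.1 \ B := hg
    refine ⟨g, ?_⟩
    calc g • x.1 = g • (x.1 \ B ∪ B) := by rw [Finset.sdiff_union_of_subset (hBS x.1 x.2.2)]
    _ = g • (x.1 \ B) ∪ g • B := Finset.smul_finset_union
    _ = (y.1 \ B) ∪ B := by rw [hg', hB]
    _ = y.1 := Finset.sdiff_union_of_subset (hBS y.1 y.2.2)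
  · intro y
    have hd : Disjoint y.1 B := by
      rw [Finset.disjoint_left]
      intro x hx hxB
      exact Finset.mem_compl.1 (y.2.1 hx) hxB
    have hint : y.1 ∩ B = ∅ := Finset.disjoint_iff_inter_eq_empty.1 hd
    refine ⟨⟨y.1 ∪ B, ?_, ?_⟩, ⟨1, ?_⟩⟩
    · rw [Finset.card_union_of_disjoint hd, y.2.2, hB2]
    · rw [Finset.union_inter_distrib_right, Finset.inter_self, hint, Finset.empty_union, hB2]
    · rw [one_smul]
      show (y.1 ∪ B) \ B = y.1
      rw [Finset.union_sdiff_right, Finset.sdiff_eq_self_iff_disjoint.2 hd]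

theorem transfer1 (a b : Ω) (hab : a ≠ b)
    (hB : ∀ g : G, g • ({a, b} : Finset Ω) = {a, b}) (t : G) (ht : t • a = b) (k : ℕ) :
    Nat.card (Quot (orel G (PiP ({a, b} : Finset Ω) (k+1) 1)))
      = Nat.card (Quot (orel (MulAction.stabilizer G a) (lev ({a, b} : Finset Ω)ᶜ k))) := by
  set B : Finset Ω := {a, b} with hBdef
  have haB : a ∈ B := Finset.mem_insert_self a {b}
  have hSmemB : ∀ S : Finset Ω, (S ∩ B).card = 1 → a ∈ S → S ∩ B = {a} := by
    intro S h haS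
    obtain ⟨x, hx⟩ := Finset.card_eq_one.1 h
    have : a ∈ S ∩ B := Finset.mem_inter.2 ⟨haS, haB⟩
    rw [hx] at this ⊢
    rw [Finset.mem_singleton] at this
    rw [this]
  have hbmem : ∀ S : Finset Ω, (S ∩ B).card = 1 → a ∉ S → b ∈ S := by
    intro S h haS
    obtain ⟨x, hx⟩ := Finset.card_eq_one.1 h
    have hxm : x ∈ S ∩ B := by rw [hx]; exact Finset.mem_singleton_self x
    rw [Finset.mem_inter] at hxm
    have hxB := hxm.2
    rw [hBdef, Finset.mem_insert, Finset.mem_singleton] at hxB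
    rcases hxB with rfl | rfl
    · exact absurd hxm.1 haS
    · exact hxm.1
  set c : Finset Ω → G := fun S => if a ∈ S then 1 else t⁻¹ with hcdef
  have hc : ∀ S : Finset Ω, PiP B (k+1) 1 S → a ∈ c S • S ∧ PiP B (k+1) 1 (c S • S) := by
    intro S hS
    by_cases haS : a ∈ S
    · have h1 : c S = 1 := if_pos haS
      rw [h1, one_smul]
      exact ⟨haS, hS⟩
    · have h1 : c S = t⁻¹ := if_neg haS
      have hbS : b ∈ S := hbmem S hS.2 haS
      have ha' : t⁻¹ • b = a := by rw [← ht, inv_smul_smul]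
      constructor
      · rw [h1, ← ha']
        exact Finset.smul_mem_smul_finset hbS
      · constructor
        · rw [Finset.card_smul_finset, hS.1]
        · rw [smul_inter_card G B hB, hS.2]
  have hlev : ∀ S : Finset Ω, PiP B (k+1) 1 S → lev Bᶜ k ((c S • S) \ B) := by
    intro S hS
    have h2 := (hc S hS).2
    constructor
    · intro x hx
      rw [Finset.mem_sdiff] at hx
      exact Finset.mem_compl.2 hx.2
    · have := Finset.card_sdiff_add_card_inter (c S • S) B
      rw [h2.1, h2.2] at this
      omega
  have hXa : ∀ S : Finset Ω, ∀ hS : PiP B (k+1) 1 S, (c S • S) ∩ B = {a} :=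
    fun S hS => hSmemB _ (hc S hS).2.2 (hc S hS).1
  have hstab_of : ∀ (u : G) (X Y : Finset Ω), X ∩ B = {a} → Y ∩ B = {a} →
      u • X = Y → u • a = a := by
    intro u X Y hX hY hu
    have haX : a ∈ X := Finset.mem_inter.1 (hX ▸ Finset.mem_singleton_self a) |>.1
    have h1 : u • a ∈ Y := hu ▸ Finset.smul_mem_smul_finset haX
    have h2 : u • a ∈ B := (hB u) ▸ Finset.smul_mem_smul_finset haB
    have h3 : u • a ∈ Y ∩ B := Finset.mem_inter.2 ⟨h1, h2⟩
    rw [hY, Finset.mem_singleton] at h3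
    exact h3
  refine quot_card_transfer _ _ (orel_equiv _ _)
    (fun S => ⟨(c S.1 • S.1) \ B, hlev S.1 S.2⟩) ?_ ?_ ?_
  · rintro x y ⟨g, hg⟩
    set u : G := c y.1 * g * (c x.1)⁻¹ with hudef
    have huXY : u • (c x.1 • x.1) = c y.1 • y.1 := by
      rw [hudef, mul_smul, mul_smul, inv_smul_smul, hg]
    have hua : u • a = a := hstab_of u _ _ (hXa x.1 x.2) (hXa y.1 y.2) huXY
    refine ⟨⟨u, MulAction.mem_stabilizer_iff.2 hua⟩, ?_⟩
    show u • ((c x.1 • x.1) \ B) = (c y.1 • y.1) \ B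
    rw [Finset.smul_finset_sdiff, hB, huXY]
  · rintro x y ⟨u, hu⟩
    have hu' : (u : G) • ((c x.1 • x.1) \ B) = (c y.1 • y.1) \ B := hu
    have hua : (u : G) • a = a := u.2
    refine ⟨(c y.1)⁻¹ * (u : G) * (c x.1), ?_⟩
    have hX : c x.1 • x.1 = ((c x.1 • x.1) \ B) ∪ {a} := by
      conv_lhs => rw [← Finset.sdiff_union_inter (c x.1 • x.1) B]
      rw [hXa x.1 x.2]
    have hY : c y.1 • y.1 = ((c y.1 • y.1) \ B) ∪ {a} := by
      conv_lhs => rw [← Finset.sdiff_union_inter (c y.1 • y.1) B]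
      rw [hXa y.1 y.2]
    have step : (u : G) • (c x.1 • x.1) = c y.1 • y.1 := by
      rw [hX, Finset.smul_finset_union, hu', Finset.smul_finset_singleton, hua, ← hY]
    rw [mul_smul, mul_smul, step, inv_smul_smul]
  · intro T
    have haT : a ∉ T.1 := fun h => Finset.mem_compl.1 (T.2.1 h) haB
    have hTB : T.1 ∩ B = ∅ := by
      rw [Finset.eq_empty_iff_forall_notMem]
      intro x hx
      rw [Finset.mem_inter] at hx
      exact Finset.mem_compl.1 (T.2.1 hx.1) hx.2
    have hPi : PiP B (k+1) 1 (insert a T.1) := by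
      constructor
      · rw [Finset.card_insert_of_notMem haT, T.2.2]
      · rw [Finset.insert_inter_of_mem haB, hTB]
        simp
    refine ⟨⟨insert a T.1, hPi⟩, ⟨1, ?_⟩⟩
    show (1 : MulAction.stabilizer G a) • ((c (insert a T.1) • insert a T.1) \ B) = T.1
    have hca : c (insert a T.1) = 1 := if_pos (Finset.mem_insert_self a T.1)
    rw [one_smul, hca, one_smul, Finset.insert_sdiff_of_mem _ haB]
    rw [Finset.sdiff_eq_self_iff_disjoint.2 (Finset.disjoint_iff_inter_eq_empty.2 hTB)]

end Transfers

section Endgame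
open scoped Classical
variable {Ω : Type*} [Fintype Ω] [DecidableEq Ω]
variable (G : Type*) [Group G] [MulAction G Ω]

theorem card_quot_le_of_subgroup (K : Subgroup G) (P : Finset Ω → Prop) :
    Nat.card (Quot (orel G P)) ≤ Nat.card (Quot (orel K P)) := by
  have hsound : ∀ x y : {S : Finset Ω // P S}, orel K P x y →
      Quot.mk (orel G P) x = Quot.mk (orel G P) y := by
    rintro x y ⟨u, hu⟩
    exact Quot.sound ⟨(u : G), hu⟩
  apply Nat.card_le_card_of_surjective (Quot.lift (fun x => Quot.mk (orel G P) x) hsound)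
  intro q
  induction q using Quot.ind with | _ x => ?_
  exact ⟨Quot.mk _ x, rfl⟩

theorem nO_lev_zero (A : Finset Ω) : Nat.card (Quot (orel G (lev A 0))) = 1 := by
  refine (nO_eq_one_iff G (lev A 0) ⟨∅, Finset.empty_subset A, Finset.card_empty⟩).2 ?_
  · intro S T
    have hS : S.1 = ∅ := Finset.card_eq_zero.1 S.2.2
    have hT : T.1 = ∅ := Finset.card_eq_zero.1 T.2.2
    exact ⟨1, by rw [hS, hT, Finset.smul_finset_empty]⟩

theorem one_le_nO_lev (A : Finset Ω) (k : ℕ) (hk : k ≤ A.card) :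
    1 ≤ Nat.card (Quot (orel G (lev A k))) := by
  obtain ⟨T, hT, hTc⟩ := Finset.exists_subset_card_eq hk
  exact one_le_nO G (lev A k) ⟨T, hT, hTc⟩

variable {a b : Ω}

theorem mem_pair' {z : Ω} : z ∈ ({a, b} : Finset Ω) ↔ z = a ∨ z = b := by
  rw [Finset.mem_insert, Finset.mem_singleton]

/-- every point of the complement is in the stabilizer-orbit of `x0` or of `t • x0` -/
theorem claim_i (hab : a ≠ b) (hB : ∀ g : G, g • ({a, b} : Finset Ω) = {a, b})
    (t : G) (ht : t • a = b)
    (htrans : ∀ x ∈ ({a, b} : Finset Ω)ᶜ, ∀ y ∈ ({a, b} : Finset Ω)ᶜ, ∃ g : G, g • x = y)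
    (x0 : Ω) (hx0 : x0 ∈ ({a, b} : Finset Ω)ᶜ) :
    ∀ y ∈ ({a, b} : Finset Ω)ᶜ,
      (∃ u : MulAction.stabilizer G a, (u : G) • x0 = y) ∨
        (∃ u : MulAction.stabilizer G a, (u : G) • (t • x0) = y) := by
  have haB : a ∈ ({a, b} : Finset Ω) := Finset.mem_insert_self a {b}
  have hbB : b ∈ ({a, b} : Finset Ω) := by rw [mem_pair']; right; rfl
  intro y hy
  obtain ⟨g, hg⟩ := htrans x0 hx0 y hy
  have hga : g • a ∈ ({a, b} : Finset Ω) := (hB g) ▸ Finset.smul_mem_smul_finset haB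
  rw [mem_pair'] at hga
  rcases hga with h | h
  · exact Or.inl ⟨⟨g, MulAction.mem_stabilizer_iff.2 h⟩, hg⟩
  · right
    have htia : t⁻¹ • a = b := by
      have h1 : t⁻¹ • a ∈ ({a, b} : Finset Ω) := (hB t⁻¹) ▸ Finset.smul_mem_smul_finset haB
      rw [mem_pair'] at h1
      rcases h1 with h1 | h1
      · exfalso
        have h2 : t • (t⁻¹ • a) = t • a := by rw [h1]
        rw [smul_inv_smul, ht] at h2
        exact hab h2
      · exact h1
    have hgb : g • b = a := by
      have h1 : g • b ∈ ({a, b} : Finset Ω) := (hB g) ▸ Finset.smul_mem_smul_finset hbB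
      rw [mem_pair'] at h1
      rcases h1 with h1 | h1
      · exact h1
      · exfalso
        have h2 : g • b = g • a := by rw [h]; exact h1
        exact hab (MulAction.injective g h2).symm
    have hmem : (g * t⁻¹) • a = a := by
      rw [mul_smul, htia, hgb]
    refine ⟨⟨g * t⁻¹, MulAction.mem_stabilizer_iff.2 hmem⟩, ?_⟩
    show (g * t⁻¹) • (t • x0) = y
    rw [mul_smul, inv_smul_smul, hg]

theorem s1_le_two (hab : a ≠ b) (hB : ∀ g : G, g • ({a, b} : Finset Ω) = {a, b})
    (t : G) (ht : t • a = b)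
    (htrans : ∀ x ∈ ({a, b} : Finset Ω)ᶜ, ∀ y ∈ ({a, b} : Finset Ω)ᶜ, ∃ g : G, g • x = y)
    (x0 : Ω) (hx0 : x0 ∈ ({a, b} : Finset Ω)ᶜ) :
    Nat.card (Quot (orel (MulAction.stabilizer G a) (lev ({a, b} : Finset Ω)ᶜ 1))) ≤ 2 := by
  have hx1 : t • x0 ∈ ({a, b} : Finset Ω)ᶜ := by
    rw [← smul_compl G hB t]
    exact Finset.smul_mem_smul_finset hx0
  set A : Finset Ω := ({a, b} : Finset Ω)ᶜ with hA
  have hlev : ∀ z : Ω, z ∈ A → lev A 1 {z} := fun z hz =>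
    ⟨Finset.singleton_subset_iff.2 hz, Finset.card_singleton z⟩
  let hF : Bool → Quot (orel (MulAction.stabilizer G a) (lev A 1)) := fun bb =>
    match bb with
    | true => Quot.mk _ ⟨{x0}, hlev x0 hx0⟩
    | false => Quot.mk _ ⟨{t • x0}, hlev _ hx1⟩
  have hsurj : Function.Surjective hF := by
    intro q
    induction q using Quot.ind with | _ S => ?_
    obtain ⟨z, hz⟩ := Finset.card_eq_one.1 S.2.2
    have hzA : z ∈ A := S.2.1 (hz ▸ Finset.mem_singleton_self z)
    rcases claim_i G hab hB t ht htrans x0 hx0 z hzA with ⟨u, hu⟩ | ⟨u, hu⟩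
    · refine ⟨true, ?_⟩
      show Quot.mk _ ⟨{x0}, hlev x0 hx0⟩ = Quot.mk _ S
      refine Quot.sound ⟨u, ?_⟩
      show (u : G) • ({x0} : Finset Ω) = S.1
      rw [Finset.smul_finset_singleton, hu, hz]
    · refine ⟨false, ?_⟩
      show Quot.mk _ ⟨{t • x0}, hlev _ hx1⟩ = Quot.mk _ S
      refine Quot.sound ⟨u, ?_⟩
      show (u : G) • ({t • x0} : Finset Ω) = S.1
      rw [Finset.smul_finset_singleton, hu, hz]
  have := Nat.card_le_card_of_surjective hF hsurj
  simpa using this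

end Endgame

section StabTrans
open scoped Classical
variable {Ω : Type*} [Fintype Ω] [DecidableEq Ω]
variable (G : Type*) [Group G] [MulAction G Ω]
variable {a b : Ω}

theorem stab_trans (hab : a ≠ b) (hB : ∀ g : G, g • ({a, b} : Finset Ω) = {a, b})
    (t : G) (ht : t • a = b)
    (htrans : ∀ x ∈ ({a, b} : Finset Ω)ᶜ, ∀ y ∈ ({a, b} : Finset Ω)ᶜ, ∃ g : G, g • x = y)
    (hcard6 : 6 ≤ ({a, b} : Finset Ω)ᶜ.card)
    (hs2 : Nat.card (Quot (orel (MulAction.stabilizer G a)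
      (lev ({a, b} : Finset Ω)ᶜ 2))) ≤ 2) :
    ∀ x ∈ ({a, b} : Finset Ω)ᶜ, ∀ y ∈ ({a, b} : Finset Ω)ᶜ,
      ∃ u : MulAction.stabilizer G a, (u : G) • x = y := by
  have haB : a ∈ ({a, b} : Finset Ω) := Finset.mem_insert_self a {b}
  have hbB : b ∈ ({a, b} : Finset Ω) := by rw [mem_pair']; right; rfl
  set A : Finset Ω := ({a, b} : Finset Ω)ᶜ with hAdef
  set K : Subgroup G := MulAction.stabilizer G a with hKdef
  have hAinv : ∀ g : G, g • A = A := fun g => smul_compl G hB g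
  intro x hx y hy
  by_contra hcon
  push_neg at hcon
  set x1 : Ω := t • x with hx1def
  have hx1 : x1 ∈ A := by
    rw [← hAinv t]
    exact Finset.smul_mem_smul_finset hx
  set O1 : Finset Ω := A.filter (fun z => ∃ u : K, (u : G) • x = z) with hO1
  set O2 : Finset Ω := A.filter (fun z => ∃ u : K, (u : G) • x1 = z) with hO2
  have hO1A : O1 ⊆ A := Finset.filter_subset _ _
  have hO2A : O2 ⊆ A := Finset.filter_subset _ _
  have hstabA : ∀ (u : K) (z : Ω), z ∈ A → (u : G) • z ∈ A := fun u z hz => by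
    rw [← hAinv (u : G)]
    exact Finset.smul_mem_smul_finset hz
  have hcover : ∀ z ∈ A, z ∈ O1 ∪ O2 := by
    intro z hz
    rcases claim_i G hab hB t ht htrans x hx z hz with ⟨u, hu⟩ | ⟨u, hu⟩
    · exact Finset.mem_union_left _ (Finset.mem_filter.2 ⟨hz, u, hu⟩)
    · exact Finset.mem_union_right _ (Finset.mem_filter.2 ⟨hz, u, hu⟩)
  have hxO1 : x ∈ O1 := Finset.mem_filter.2 ⟨hx, 1, one_smul _ _⟩
  have hx1O2 : x1 ∈ O2 := Finset.mem_filter.2 ⟨hx1, 1, one_smul _ _⟩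
  have hyO2 : y ∈ O2 := by
    rcases claim_i G hab hB t ht htrans x hx y hy with ⟨u, hu⟩ | ⟨u, hu⟩
    · exact absurd hu (hcon u)
    · exact Finset.mem_filter.2 ⟨hy, u, hu⟩
  have hdisj : Disjoint O1 O2 := by
    rw [Finset.disjoint_left]
    rintro z hz1 hz2
    obtain ⟨-, u1, hu1⟩ := Finset.mem_filter.1 hz1
    obtain ⟨-, u2, hu2⟩ := Finset.mem_filter.1 hz2
    obtain ⟨-, u3, hu3⟩ := Finset.mem_filter.1 hyO2
    apply hcon (u3 * u2⁻¹ * u1)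
    show ((u3 : G) * (u2 : G)⁻¹ * (u1 : G)) • x = y
    rw [mul_smul, mul_smul, hu1, ← hu2, inv_smul_smul, hu3]
  have hKb : ∀ u : K, (u : G) • b = b := by
    intro u
    have h1 : (u : G) • b ∈ ({a, b} : Finset Ω) := (hB _) ▸ Finset.smul_mem_smul_finset hbB
    rw [mem_pair'] at h1
    rcases h1 with h1 | h1
    · exfalso
      have h2 : (u : G) • a = a := u.2
      rw [← h2] at h1
      exact hab (MulAction.injective _ h1).symm
    · exact h1
  have htia : t⁻¹ • b = a := by rw [← ht, inv_smul_smul]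
  have htb : t • b = a := by
    have h1 : t • b ∈ ({a, b} : Finset Ω) := (hB t) ▸ Finset.smul_mem_smul_finset hbB
    rw [mem_pair'] at h1
    rcases h1 with h1 | h1
    · exact h1
    · exfalso
      have h2 : t • b = t • a := by rw [h1, ← ht]
      exact hab (MulAction.injective t h2).symm
  have htK : ∀ u : K, t * (u : G) * t⁻¹ ∈ K := by
    intro u
    refine MulAction.mem_stabilizer_iff.2 ?_
    show (t * (u : G) * t⁻¹) • a = a
    have : t⁻¹ • a = b := by
      have h1 : t⁻¹ • a ∈ ({a, b} : Finset Ω) := (hB t⁻¹) ▸ Finset.smul_mem_smul_finset haB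
      rw [mem_pair'] at h1
      rcases h1 with h1 | h1
      · exfalso
        have h2 : t • (t⁻¹ • a) = t • a := by rw [h1]
        rw [smul_inv_smul, ht] at h2
        exact hab h2
      · exact h1
    rw [mul_smul, mul_smul, this, hKb u, htb]
  have ht'K : ∀ u : K, t⁻¹ * (u : G) * t ∈ K := by
    intro u
    refine MulAction.mem_stabilizer_iff.2 ?_
    show (t⁻¹ * (u : G) * t) • a = a
    rw [mul_smul, mul_smul, ht, hKb u, htia]
  have hmap1 : ∀ z ∈ O1, t • z ∈ O2 := by
    intro z hz
    obtain ⟨hzA, u, hu⟩ := Finset.mem_filter.1 hz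
    refine Finset.mem_filter.2 ⟨by rw [← hAinv t]; exact Finset.smul_mem_smul_finset hzA,
      ⟨t * (u : G) * t⁻¹, htK u⟩, ?_⟩
    show (t * (u : G) * t⁻¹) • x1 = t • z
    rw [hx1def, mul_smul, mul_smul, inv_smul_smul, hu]
  have hmap2 : ∀ z ∈ O2, t⁻¹ • z ∈ O1 := by
    intro z hz
    obtain ⟨hzA, u, hu⟩ := Finset.mem_filter.1 hz
    refine Finset.mem_filter.2 ⟨by rw [← hAinv t⁻¹]; exact Finset.smul_mem_smul_finset hzA,
      ⟨t⁻¹ * (u : G) * t, ht'K u⟩, ?_⟩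
    show (t⁻¹ * (u : G) * t) • x = t⁻¹ • z
    rw [mul_smul, mul_smul, ← hx1def, hu]
  have hcard12 : O1.card ≤ O2.card := by
    apply Finset.card_le_card_of_injOn (fun z => t • z) hmap1
    intro z1 _ z2 _ h
    exact MulAction.injective t h
  have hcard21 : O2.card ≤ O1.card := by
    apply Finset.card_le_card_of_injOn (fun z => t⁻¹ • z) hmap2
    intro z1 _ z2 _ h
    exact MulAction.injective t⁻¹ h
  have hcardeq : O1.card = O2.card := le_antisymm hcard12 hcard21
  have hunion : O1 ∪ O2 = A := by
    apply Finset.Subset.antisymm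
    · exact Finset.union_subset hO1A hO2A
    · exact hcover
  have hcardsum : O1.card + O2.card = A.card := by
    rw [← Finset.card_union_of_disjoint hdisj, hunion]
  have hO1big : 2 ≤ O1.card := by omega
  have hO2big : 2 ≤ O2.card := by omega
  obtain ⟨x', hx'O1, hx'ne⟩ := Finset.exists_mem_ne (show 1 < O1.card by omega) x
  obtain ⟨y', hy'O2, hy'ne⟩ := Finset.exists_mem_ne (show 1 < O2.card by omega) x1
  have hxx1 : x ≠ x1 := by
    intro h
    exact Finset.disjoint_left.1 hdisj hxO1 (h ▸ hx1O2)
  -- the three pair sets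
  have hlev : ∀ z w : Ω, z ∈ A → w ∈ A → z ≠ w → lev A 2 ({z, w} : Finset Ω) := by
    intro z w hz hw hzw
    exact ⟨Finset.insert_subset hz (Finset.singleton_subset_iff.2 hw), Finset.card_pair hzw⟩
  have hinvO1 : ∀ u : K, (u : G) • O1 = O1 := by
    intro u
    apply Finset.eq_of_subset_of_card_le
    · intro w hw
      rw [Finset.mem_smul_finset] at hw
      obtain ⟨z, hz, rfl⟩ := hw
      obtain ⟨hzA, u1, hu1⟩ := Finset.mem_filter.1 hz
      exact Finset.mem_filter.2 ⟨hstabA u z hzA, u * u1, by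
        show ((u : G) * (u1 : G)) • x = (u : G) • z
        rw [mul_smul, hu1]⟩
    · rw [Finset.card_smul_finset]
  have hinvcard : ∀ (u : K) (P : Finset Ω), (((u : G) • P) ∩ O1).card = (P ∩ O1).card := by
    intro u P
    conv_lhs => rw [← hinvO1 u, ← Finset.smul_finset_inter]
    rw [Finset.card_smul_finset]
  -- distinctness of the three orbit classes
  have hkey : ∀ P Q : {S : Finset Ω // lev A 2 S},
      Quot.mk (orel K (lev A 2)) P = Quot.mk (orel K (lev A 2)) Q →
        (P.1 ∩ O1).card = (Q.1 ∩ O1).card := by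
    intro P Q h
    rw [Quot.eq] at h
    obtain ⟨u, hu⟩ := (orel_equiv K _).eqvGen_iff.1 h
    have hu' : (u : G) • P.1 = Q.1 := hu
    rw [← hu', hinvcard]
  have hx'A : x' ∈ A := hO1A hx'O1
  have hy'A : y' ∈ A := hO2A hy'O2
  have hq1 : lev A 2 ({x, x'} : Finset Ω) := hlev x x' hx hx'A (Ne.symm hx'ne)
  have hq2 : lev A 2 ({x1, y'} : Finset Ω) := hlev x1 y' hx1 hy'A (Ne.symm hy'ne)
  have hq3 : lev A 2 ({x, x1} : Finset Ω) := hlev x x1 hx hx1 hxx1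
  have hc1 : (({x, x'} : Finset Ω) ∩ O1).card = 2 := by
    rw [Finset.inter_eq_left.2
      (Finset.insert_subset hxO1 (Finset.singleton_subset_iff.2 hx'O1))]
    exact Finset.card_pair (Ne.symm hx'ne)
  have hc2 : (({x1, y'} : Finset Ω) ∩ O1).card = 0 := by
    rw [Finset.card_eq_zero, Finset.eq_empty_iff_forall_notMem]
    intro z hz
    rw [Finset.mem_inter, mem_pair'] at hz
    rcases hz with ⟨(rfl | rfl), hzO1⟩
    · exact Finset.disjoint_left.1 hdisj hzO1 hx1O2
    · exact Finset.disjoint_left.1 hdisj hzO1 hy'O2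
  have hc3 : (({x, x1} : Finset Ω) ∩ O1).card = 1 := by
    have : ({x, x1} : Finset Ω) ∩ O1 = {x} := by
      ext z
      rw [Finset.mem_inter, mem_pair', Finset.mem_singleton]
      constructor
      · rintro ⟨rfl | rfl, hzO1⟩
        · rfl
        · exact absurd hzO1 (fun hc => Finset.disjoint_left.1 hdisj hc hx1O2)
      · rintro rfl
        exact ⟨Or.inl rfl, hxO1⟩
    rw [this, Finset.card_singleton]
  let q1 := Quot.mk (orel K (lev A 2)) ⟨{x, x'}, hq1⟩
  let q2 := Quot.mk (orel K (lev A 2)) ⟨{x1, y'}, hq2⟩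
  let q3 := Quot.mk (orel K (lev A 2)) ⟨{x, x1}, hq3⟩
  have h12 : q1 ≠ q2 := fun h => by
    have := hkey _ _ h
    rw [hc1, hc2] at this
    omega
  have h13 : q1 ≠ q3 := fun h => by
    have := hkey _ _ h
    rw [hc1, hc3] at this
    omega
  have h23 : q2 ≠ q3 := fun h => by
    have := hkey _ _ h
    rw [hc2, hc3] at this
    omega
  let f : Fin 3 → Quot (orel K (lev A 2)) := fun i =>
    match i with
    | 0 => q1
    | 1 => q2
    | 2 => q3
  have hinj : Function.Injective f := by
    intro i j h
    fin_cases i <;> fin_cases j <;>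
      first
        | rfl
        | (exact absurd h h12)
        | (exact absurd h h13)
        | (exact absurd h h23)
        | (exact absurd h.symm h12)
        | (exact absurd h.symm h13)
        | (exact absurd h.symm h23)
  have hle := Nat.card_le_card_of_injective f hinj
  simp only [Nat.card_eq_fintype_card, Fintype.card_fin] at hle
  omega

end StabTrans

/-- Lemma 3.7: if `{n-1, n}` (the last two points, here `a` and `b`) is an orbit of
`H ≤ S_n` for `n ≥ 8`, and `O_2(H) = ⋯ = O_d(H)` for some `3 ≤ d ≤ (n-2)/2`, then `H`
acts `d`-homogeneously on the remaining `n - 2` points. -/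
theorem stmt8 (n d : ℕ) (hn : 8 ≤ n)
    (H : Subgroup (Equiv.Perm (Fin n))) (a b : Fin n)
    (ha : (a : ℕ) = n - 2) (hb : (b : ℕ) = n - 1)
    (horb : MulAction.orbit H a = {a, b})
    (hd1 : 3 ≤ d) (hd2 : 2 * d ≤ n - 2)
    (hO : ∀ k, 2 ≤ k → k ≤ d →
      numOrbits H (fun S : Finset (Fin n) => S.card = k)
        = numOrbits H (fun S : Finset (Fin n) => S.card = 2)) :
    IsHomogeneousOn H ({a, b} : Finset (Fin n))ᶜ d := by
  classical
  have hab : a ≠ b := by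
    intro h
    have h2 := congrArg Fin.val h
    rw [ha, hb] at h2
    omega
  set B : Finset (Fin n) := {a, b} with hBdef
  have hB2 : B.card = 2 := Finset.card_pair hab
  have hbmem : b ∈ MulAction.orbit H a := by
    rw [horb]
    exact Set.mem_insert_iff.2 (Or.inr (Set.mem_singleton b))
  have horbb : MulAction.orbit H b = MulAction.orbit H a := MulAction.orbit_eq_iff.2 hbmem
  have hga : ∀ g : ↥H, g • a ∈ B := by
    intro g
    have h1 : g • a ∈ MulAction.orbit H a := MulAction.mem_orbit a g
    rw [horb, Set.mem_insert_iff, Set.mem_singleton_iff] at h1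
    rw [hBdef, mem_pair']
    exact h1
  have hgb : ∀ g : ↥H, g • b ∈ B := by
    intro g
    have h1 : g • b ∈ MulAction.orbit H b := MulAction.mem_orbit b g
    rw [horbb, horb, Set.mem_insert_iff, Set.mem_singleton_iff] at h1
    rw [hBdef, mem_pair']
    exact h1
  have hBinv : ∀ g : ↥H, g • B = B := by
    intro g
    apply Finset.eq_of_subset_of_card_le
    · rw [hBdef, Finset.smul_finset_insert, Finset.smul_finset_singleton]
      exact Finset.insert_subset (hBdef ▸ hga g)
        (Finset.singleton_subset_iff.2 (hBdef ▸ hgb g))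
    · rw [Finset.card_smul_finset]
  obtain ⟨t, ht⟩ := MulAction.mem_orbit_iff.1 hbmem
  set A : Finset (Fin n) := Bᶜ with hAdef
  have hAinv : ∀ g : ↥H, g • A = A := fun g => smul_compl ↥H hBinv g
  have hAcard : A.card = n - 2 := by
    rw [hAdef, Finset.card_compl, hB2, Fintype.card_fin]
  set K : Subgroup ↥H := MulAction.stabilizer ↥H a with hKdef
  have hKAinv : ∀ u : ↥K, u • A = A := fun u => hAinv (u : ↥H)
  set p : ℕ → ℕ := fun k => Nat.card (Quot (orel ↥H (lev A k))) with hpdef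
  set s : ℕ → ℕ := fun k => Nat.card (Quot (orel ↥K (lev A k))) with hsdef
  have hpeq : ∀ k, p k = Nat.card (Quot (orel ↥H (lev A k))) := fun _ => rfl
  have hseq : ∀ k, s k = Nat.card (Quot (orel ↥K (lev A k))) := fun _ => rfl
  -- decomposition
  have hdec : ∀ j : ℕ, numOrbits H (fun S : Finset (Fin n) => S.card = (j+2))
      = p (j+2) + s (j+1) + p j := by
    intro j
    have hpart := partition ↥H B hBinv hB2 (j+2)
    have h0 := transfer0 ↥H B (j+2)
    have h1 := transfer1 ↥H a b hab (hBdef ▸ hBinv) t ht (j+1)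
    have h2 := transfer2 ↥H B hBinv hB2 j
    rw [show j+1+1 = j+2 from rfl] at h1
    rw [← hBdef] at h1
    rw [← hAdef] at h0 h1 h2
    rw [← hKdef] at h1
    rw [← hpeq (j+2)] at h0
    rw [← hseq (j+1)] at h1
    rw [← hpeq j] at h2
    have hnum : numOrbits H (fun S : Finset (Fin n) => S.card = (j+2))
        = Nat.card (Quot (orel ↥H (fun S : Finset (Fin n) => S.card = (j+2)))) := rfl
    rw [hnum, hpart, h0, h1, h2]
  -- Livingstone–Wagner inequalities
  have hLWp : ∀ j, j + 1 ≤ d → p j ≤ p (j+1) := by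
    intro j hj
    match j with
    | 0 =>
      have h1 : p 0 = 1 := nO_lev_zero ↥H A
      have h2 : 1 ≤ p 1 := one_le_nO_lev ↥H A 1 (by omega)
      have h0eq : p (0+1) = p 1 := congrArg p (by omega)
      omega
    | (i+1) =>
      have h3 := LW_step ↥H A i hAinv (by rw [hAcard]; omega)
      rw [← hpeq (i+1), ← hpeq (i+2)] at h3
      exact h3
  have hLWs : ∀ j, j + 2 ≤ d → s (j+1) ≤ s (j+2) := by
    intro j hj
    have h3 := LW_step ↥K A j hKAinv (by rw [hAcard]; omega)
    rw [← hseq (j+1), ← hseq (j+2)] at h3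
    exact h3
  -- extraction of the chain
  have hext : ∀ j, j + 3 ≤ d →
      p (j+3) = p (j+2) ∧ s (j+2) = s (j+1) ∧ p (j+1) = p j := by
    intro j hj
    have e1 := hdec (j+1)
    rw [show j+1+2 = j+3 from rfl, show j+1+1 = j+2 from rfl] at e1
    have e2 := hdec j
    have e3 := hO (j+3) (by omega) hj
    have e4 := hO (j+2) (by omega) (by omega)
    have i1 := hLWp (j+2) (by omega)
    rw [show j+2+1 = j+3 from rfl] at i1
    have i2 := hLWp (j+1) (by omega)
    rw [show j+1+1 = j+2 from rfl] at i2
    have i3 := hLWp j (by omega)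
    have i4 := hLWs j (by omega)
    omega
  have hpchain : ∀ i, 2 + i ≤ d → p (2 + i) = p 2 := by
    intro i
    induction i with
    | zero => intro _; rfl
    | succ m ih =>
      intro h
      have c1 : p (2 + (m + 1)) = p (m + 3) := congrArg p (by omega)
      have c2 : p (m + 2) = p (2 + m) := congrArg p (by omega)
      rw [c1, (hext m (by omega)).1, c2]
      exact ih (by omega)
  have hschain : ∀ i, i + 2 ≤ d → s (i + 1) = s 1 := by
    intro i
    induction i with
    | zero => intro _; rfl
    | succ m ih =>
      intro h
      have c1 : s (m + 1 + 1) = s (m + 2) := congrArg s (by omega)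
      rw [c1, (hext m (by omega)).2.1]
      exact ih (by omega)
  have hp0 : p 0 = 1 := nO_lev_zero ↥H A
  have hp1 : p 1 = 1 := by
    have := (hext 0 (by omega)).2.2
    rw [show (0:ℕ)+1 = 1 from rfl] at this
    omega
  -- H is transitive on A
  have htransA : ∀ x ∈ A, ∀ y ∈ A, ∃ g : ↥H, g • x = y := by
    intro x hx y hy
    have hlevx : lev A 1 {x} := ⟨Finset.singleton_subset_iff.2 hx, Finset.card_singleton x⟩
    have hlevy : lev A 1 {y} := ⟨Finset.singleton_subset_iff.2 hy, Finset.card_singleton y⟩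
    have h1 := (nO_eq_one_iff ↥H (lev A 1) ⟨{x}, hlevx⟩).1 hp1 ⟨{x}, hlevx⟩ ⟨{y}, hlevy⟩
    obtain ⟨g, hg⟩ := h1
    have hg' : g • ({x} : Finset (Fin n)) = {y} := hg
    rw [Finset.smul_finset_singleton] at hg'
    exact ⟨g, Finset.singleton_injective hg'⟩
  have hcard6 : 6 ≤ A.card := by omega
  obtain ⟨x0, hx0⟩ := Finset.card_pos.1 (show 0 < A.card by omega)
  have hs1le : s 1 ≤ 2 := by
    have := s1_le_two ↥H hab (hBdef ▸ hBinv) t ht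
      (by rw [← hBdef] at *; exact htransA) x0 (by rw [← hBdef] at *; exact hx0)
    rw [← hBdef, ← hAdef, ← hKdef, ← hseq 1] at this
    exact this
  have hs2le : s 2 ≤ 2 := by
    have := hschain 1 (by omega)
    rw [show (1:ℕ)+1 = 2 from rfl] at this
    omega
  have hKtrans : ∀ x ∈ A, ∀ y ∈ A, ∃ u : ↥K, (u : ↥H) • x = y := by
    have h1 := stab_trans ↥H hab (hBdef ▸ hBinv) t ht
      (by rw [← hBdef] at *; exact htransA) (by rw [← hBdef] at *; exact hcard6)
      (by rw [← hBdef] at *; exact (by rw [hseq 2] at hs2le; exact hs2le))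
    intro x hx y hy
    exact h1 x (by rw [← hBdef] at *; exact hx) y (by rw [← hBdef] at *; exact hy)
  have hs1 : s 1 = 1 := by
    refine (nO_eq_one_iff ↥K (lev A 1)
      ⟨{x0}, Finset.singleton_subset_iff.2 hx0, Finset.card_singleton x0⟩).2 ?_
    intro S T
    obtain ⟨z, hz⟩ := Finset.card_eq_one.1 S.2.2
    obtain ⟨w, hw⟩ := Finset.card_eq_one.1 T.2.2
    have hzA : z ∈ A := S.2.1 (hz ▸ Finset.mem_singleton_self z)
    have hwA : w ∈ A := T.2.1 (hw ▸ Finset.mem_singleton_self w)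
    obtain ⟨u, hu⟩ := hKtrans z hzA w hwA
    refine ⟨u, ?_⟩
    show (u : ↥H) • S.1 = T.1
    rw [hz, hw, Finset.smul_finset_singleton, hu]
  have hsd1 : s (d - 1) = 1 := by
    have h1 := hschain (d - 2) (by omega)
    have c1 : s (d - 2 + 1) = s (d - 1) := congrArg s (by omega)
    rw [c1] at h1
    omega
  have hple : p (d-1) ≤ s (d-1) := by
    have := card_quot_le_of_subgroup ↥H K (lev A (d-1))
    rw [← hpeq (d-1), ← hseq (d-1)] at this
    exact this
  have hpge : 1 ≤ p (d-1) := one_le_nO_lev ↥H A (d-1) (by omega)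
  have hpd1 : p (d-1) = 1 := by omega
  have hp2eq : p 2 = 1 := by
    have h1 := hpchain (d - 3) (by omega)
    have c1 : p (2 + (d - 3)) = p (d - 1) := congrArg p (by omega)
    rw [c1] at h1
    omega
  have hpd : p d = 1 := by
    have h1 := hpchain (d - 2) (by omega)
    have c1 : p (2 + (d - 2)) = p d := congrArg p (by omega)
    rw [c1] at h1
    omega
  -- conclusion
  intro S T hS hT hSc hTc
  have hlevS : lev A d S := ⟨hS, hSc⟩
  have hlevT : lev A d T := ⟨hT, hTc⟩
  have h1 := (nO_eq_one_iff ↥H (lev A d) ⟨S, hlevS⟩).1 hpd ⟨S, hlevS⟩ ⟨T, hlevT⟩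
  obtain ⟨g, hg⟩ := h1
  exact ⟨(g : Equiv.Perm (Fin n)), g.2, hg⟩
end
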